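/- arXiv:2111.02547 — 9 statements merged into one kernel-verified Lean document; each statement's English description precedes it below -/
import Mathlib

section
/- Let f, g ∈ Cu(G) and let A = (A_n) be a van Hove sequence. If the Eberlein convolution f ⊛_A g exists, then the Eberlein convolution g ⊛_{−A} f exists and g ⊛_{−A} f = f ⊛_A g (as functions on G). -/
open MeasureTheory Filter Topology Pointwise ComplexConjugate
open scoped BigOperators

noncomputable section

variable {G : Type*} [AddCommGroup G] [UniformSpace G] [IsUniformAddGroup G]
  [LocallyCompactSpace G] [SecondCountableTopology G]
  [MeasurableSpace G] [BorelSpace G]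

/-- The van Hove `K`-boundary of a set `B`:
`∂^K B = (closure (B+K) \ B) ∪ (((G \ B) - K) ∩ closure B)`. -/
def vhBoundary (K B : Set G) : Set G :=
  (closure (B + K) \ B) ∪ ((Bᶜ - K) ∩ closure B)

/-- `A` is a van Hove sequence for the Haar measure `μ`: a sequence of compact sets of
positive measure such that for every compact `K` the relative measure of the van Hove
boundary tends to `0`. -/
def IsVanHove (μ : Measure G) (A : ℕ → Set G) : Prop :=
  (∀ n, IsCompact (A n)) ∧ (∀ n, 0 < μ (A n)) ∧
    ∀ K : Set G, IsCompact K →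
      Tendsto (fun n => μ (vhBoundary K (A n)) / μ (A n)) atTop (nhds 0)

/-- `f ∈ Cu(G)`: bounded and uniformly continuous. -/
def IsCu (f : G → ℂ) : Prop :=
  UniformContinuous f ∧ ∃ C : ℝ, ∀ x, ‖f x‖ ≤ C

/-- `χ` is a (continuous, unimodular) character of `G`, viewed as a `ℂ`-valued function. -/
def IsChar (χ : G → ℂ) : Prop :=
  Continuous χ ∧ (∀ x, ‖χ x‖ = 1) ∧ ∀ x y, χ (x + y) = χ x * χ y

/-- `f̃(x) = conj (f (-x))`. -/
def tilde (f : G → ℂ) : G → ℂ := fun x => conj (f (-x))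

/-- `(T_t f)(x) = f (x - t)`. -/
def shiftBy (t : G) (f : G → ℂ) : G → ℂ := fun x => f (x - t)

/-- Sup norm `‖f‖_∞`. -/
def supN (f : G → ℂ) : ℝ := ⨆ x, ‖f x‖

/-- The Fourier–Bohr coefficient `c_χ^A(f)` exists and equals `c`. -/
def FBTendsto (μ : Measure G) (A : ℕ → Set G) (χ f : G → ℂ) (c : ℂ) : Prop :=
  Tendsto (fun n => (μ (A n)).toReal⁻¹ • ∫ t in A n, conj (χ t) * f t ∂μ)
    atTop (nhds c)

/-- The Fourier–Bohr coefficient of `f` at `χ` exists uniformly (w.r.t. `A`) with value `c`: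
`lim_n |A_n|⁻¹ ∫_{x+A_n} conj (χ t) f t dθ(t) = c` uniformly in `x ∈ G`. -/
def FBUniform (μ : Measure G) (A : ℕ → Set G) (χ f : G → ℂ) (c : ℂ) : Prop :=
  TendstoUniformly
    (fun n (x : G) => (μ (A n)).toReal⁻¹ • ∫ t in x +ᵥ A n, conj (χ t) * f t ∂μ)
    (fun _ => c) atTop

/-- The Eberlein convolution `f ⊛_A g` exists and equals `F`:
for every `t`, `lim_n |A_n|⁻¹ ∫_{A_n} f s · g (t - s) dθ(s) = F t`. -/
def EberleinTendsto (μ : Measure G) (A : ℕ → Set G) (f g F : G → ℂ) : Prop :=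
  ∀ t : G, Tendsto (fun n => (μ (A n)).toReal⁻¹ • ∫ s in A n, f s * g (t - s) ∂μ)
    atTop (nhds (F t))

/-- The Besicovitch seminorm `‖f‖_{b,p,A}`. -/
def bNorm (μ : Measure G) (A : ℕ → Set G) (p : ℝ) (f : G → ℂ) : ℝ :=
  Filter.limsup
    (fun n => ((μ (A n)).toReal⁻¹ * ∫ t in A n, ‖f t‖ ^ p ∂μ) ^ (1 / p)) atTop

/-- `P` is a trigonometric polynomial: a finite linear combination of characters. -/
def IsTrigPoly (P : G → ℂ) : Prop :=
  ∃ (k : ℕ) (c : Fin k → ℂ) (χ : Fin k → G → ℂ),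
    (∀ j, IsChar (χ j)) ∧ P = fun x => ∑ j, c j * χ j x

/-- `f ∈ Bap^p_A(G)`: `f` can be approximated by trigonometric polynomials in `‖·‖_{b,p,A}`. -/
def BapP (μ : Measure G) (A : ℕ → Set G) (p : ℝ) (f : G → ℂ) : Prop :=
  ∀ ε : ℝ, 0 < ε → ∃ P : G → ℂ, IsTrigPoly P ∧ bNorm μ A p (fun x => f x - P x) < ε

/-- `f` is amenable w.r.t. `A` with mean `c`:
`lim_n |A_n|⁻¹ ∫_{x+A_n} f dθ = c` uniformly in `x ∈ G`. -/
def Amenable (μ : Measure G) (A : ℕ → Set G) (f : G → ℂ) (c : ℂ) : Prop :=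
  TendstoUniformly
    (fun n (x : G) => (μ (A n)).toReal⁻¹ • ∫ t in x +ᵥ A n, f t ∂μ)
    (fun _ => c) atTop

/-- if `f ⊛_A g` exists then `g ⊛_{-A} f` exists and equals it. -/
theorem stmt1 (μ : Measure G) [μ.IsAddHaarMeasure] (A : ℕ → Set G)
    (hA : IsVanHove μ A) (f g : G → ℂ) (hf : IsCu f) (hg : IsCu g) (F : G → ℂ)
    (h : EberleinTendsto μ A f g F) :
    EberleinTendsto μ (fun n => -(A n)) g f F := by
  obtain ⟨hAc, hApos, hAvh⟩ := hA
  haveI : (uniformity G).IsCountablyGenerated :=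
    IsUniformAddGroup.uniformity_countably_generated
  haveI : μ.Regular := inferInstance
  haveI : μ.IsNegInvariant := inferInstance
  intro t
  obtain ⟨hfu, Cf, hCf⟩ := hf
  obtain ⟨hgu, Cg, hCg⟩ := hg
  have hfc : Continuous f := hfu.continuous
  have hgc : Continuous g := hgu.continuous
  set w : G → ℂ := fun v => f v * g (t - v) with hw
  have hwc : Continuous w := hfc.mul (hgc.comp (continuous_const.sub continuous_id))
  have hCf0 : 0 ≤ Cf := (norm_nonneg _).trans (hCf 0)
  have hCg0 : 0 ≤ Cg := (norm_nonneg _).trans (hCg 0)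
  set C : ℝ := Cf * Cg with hC
  have hC0 : 0 ≤ C := mul_nonneg hCf0 hCg0
  have hwb : ∀ v, ‖w v‖ ≤ C := by
    intro v
    rw [hw]
    calc ‖f v * g (t - v)‖ = ‖f v‖ * ‖g (t - v)‖ := norm_mul _ _
    _ ≤ Cf * Cg := mul_le_mul (hCf v) (hCg _) (norm_nonneg _) hCf0
  -- measurable versions of the A n
  set B : ℕ → Set G := fun n => toMeasurable μ (A n) ∩ closure (A n) with hB
  have hAfin : ∀ n, μ (A n) ≠ ⊤ := fun n => (hAc n).measure_lt_top.ne
  have hBm : ∀ n, MeasurableSet (B n) := fun n =>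
    (measurableSet_toMeasurable μ (A n)).inter isClosed_closure.measurableSet
  have hAB : ∀ n, A n ⊆ B n := fun n =>
    Set.subset_inter (subset_toMeasurable μ (A n)) subset_closure
  have hBcl : ∀ n, B n ⊆ closure (A n) := fun n => Set.inter_subset_right
  have hBres : ∀ n, μ.restrict (B n) = μ.restrict (A n) := by
    intro n
    refine le_antisymm ?_ (Measure.restrict_mono (hAB n) le_rfl)
    have h1 : μ.restrict (B n) ≤ μ.restrict (toMeasurable μ (A n)) :=
      Measure.restrict_mono Set.inter_subset_left le_rfl
    rwa [Measure.restrict_toMeasurable (hAfin n)] at h1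
  -- the window K
  set K : Set G := {t, -t} with hKdef
  have hK : IsCompact K := (Set.toFinite K).isCompact
  -- integrability
  have hintcl : ∀ n, IntegrableOn w (closure (A n)) μ :=
    fun n => hwc.continuousOn.integrableOn_compact' (hAc n).closure
      isClosed_closure.measurableSet
  have hintB : ∀ n, IntegrableOn w (B n) μ := fun n => (hintcl n).mono_set (hBcl n)
  have hintT : ∀ n, IntegrableOn w (t +ᵥ B n) μ := by
    intro n
    have hpre : t +ᵥ closure (A n) = (fun x => -t + x) ⁻¹' closure (A n) := by
      ext x; simp [Set.mem_vadd_set_iff_neg_vadd_mem, vadd_eq_add]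
    have hcp : IsCompact (t +ᵥ closure (A n)) := by
      rw [hpre]; exact (Homeomorph.addLeft (-t)).isCompact_preimage.mpr (hAc n).closure
    have hcl : IsClosed (t +ᵥ closure (A n)) := by
      rw [hpre]; exact isClosed_closure.preimage (continuous_const_vadd (-t))
    have : IntegrableOn w (t +ᵥ closure (A n)) μ :=
      hwc.continuousOn.integrableOn_compact' hcp hcl.measurableSet
    exact this.mono_set (Set.vadd_set_mono (hBcl n))
  have hTm : ∀ n, MeasurableSet (t +ᵥ B n) := fun n => (hBm n).const_vadd t
  -- step 1 : rewrite the target integral as an integral over t +ᵥ B n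
  have key1 : ∀ n, ∫ s in -(A n), g s * f (t - s) ∂μ = ∫ v in t +ᵥ B n, w v ∂μ := by
    intro n
    have e1 : ∫ s in -(A n), g s * f (t - s) ∂μ
        = ∫ x in Neg.neg ⁻¹' (-(A n)), g (-x) * f (t - -x) ∂μ :=
      ((Measure.measurePreserving_neg μ).setIntegral_preimage_emb
        (MeasurableEquiv.neg G).measurableEmbedding
        (fun s => g s * f (t - s)) (-(A n))).symm
    have e2 : Neg.neg ⁻¹' (-(A n)) = A n := by
      ext x; simp [Set.mem_neg]
    have e3 : ∫ v in t +ᵥ B n, w v ∂μ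
        = ∫ x in (t + ·) ⁻¹' (t +ᵥ B n), w (t + x) ∂μ :=
      ((measurePreserving_add_left μ t).setIntegral_preimage_emb
        (MeasurableEquiv.addLeft t).measurableEmbedding w (t +ᵥ B n)).symm
    have e4 : (t + ·) ⁻¹' (t +ᵥ B n) = B n := by
      ext x
      simp [Set.mem_vadd_set_iff_neg_vadd_mem, vadd_eq_add, neg_add_cancel_left]
    have e5 : (fun x => g (-x) * f (t - -x)) = fun x => w (t + x) := by
      funext x
      rw [hw]
      simp only [sub_neg_eq_add, sub_add_cancel_left]
      ring
    rw [e1, e2, e5, e3, e4]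
    · rw [← hBres n]
  -- step 2 : the difference of the two set integrals
  set d : ℕ → ℂ := fun n =>
    (μ (A n)).toReal⁻¹ • (∫ v in t +ᵥ B n, w v ∂μ - ∫ v in B n, w v ∂μ) with hd
  -- the symmetric difference is inside the van Hove boundary
  have hdiffsub : ∀ n, ((t +ᵥ B n) \ B n) ∪ (B n \ (t +ᵥ B n)) ⊆ vhBoundary K (A n) := by
    intro n x hx
    rcases hx with ⟨hxT, hxB⟩ | ⟨hxB, hxT⟩
    · left
      obtain ⟨b, hb, rfl⟩ := hxT
      refine ⟨?_, fun hxA => hxB (hAB n hxA)⟩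
      have hb' : b ∈ closure (A n) := hBcl n hb
      have ht' : t ∈ closure K := subset_closure (Set.mem_insert t _)
      have hcl : b + t ∈ closure (A n + K) :=
        map_mem_closure₂ continuous_add hb' ht' (fun a ha k hk => Set.add_mem_add ha hk)
      simpa [vadd_eq_add, add_comm] using hcl
    · right
      refine ⟨?_, hBcl n hxB⟩
      have hxt : x - t ∉ B n := by
        intro hmem
        exact hxT ⟨x - t, hmem, by show t + (x - t) = x; abel⟩
      exact ⟨x - t, fun hxA => hxt (hAB n hxA), -t,
        Set.mem_insert_iff.mpr (Or.inr rfl), by show (x - t) - (-t) = x; abel⟩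
  -- finiteness of the boundary measure
  have hbfin : ∀ n, μ (vhBoundary K (A n)) ≠ ⊤ := by
    intro n
    have hsub : vhBoundary K (A n) ⊆ closure (A n + K) ∪ closure (A n) :=
      Set.union_subset_union Set.diff_subset Set.inter_subset_right
    refine ((measure_mono hsub).trans_lt ?_).ne
    refine (measure_union_le _ _).trans_lt ?_
    exact ENNReal.add_lt_top.mpr ⟨((hAc n).add hK).closure.measure_lt_top,
      (hAc n).closure.measure_lt_top⟩
  -- norm bound on d n
  have hbound : ∀ n, ‖d n‖ ≤ (2 * C) * (μ (vhBoundary K (A n)) / μ (A n)).toReal := by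
    intro n
    have hsplitT : ∫ v in (t +ᵥ B n) ∩ B n, w v ∂μ + ∫ v in (t +ᵥ B n) \ B n, w v ∂μ
        = ∫ v in t +ᵥ B n, w v ∂μ := integral_inter_add_diff (hBm n) (hintT n)
    have hsplitB : ∫ v in B n ∩ (t +ᵥ B n), w v ∂μ + ∫ v in B n \ (t +ᵥ B n), w v ∂μ
        = ∫ v in B n, w v ∂μ := integral_inter_add_diff (hTm n) (hintB n)
    have hdiff : ∫ v in t +ᵥ B n, w v ∂μ - ∫ v in B n, w v ∂μ
        = ∫ v in (t +ᵥ B n) \ B n, w v ∂μ - ∫ v in B n \ (t +ᵥ B n), w v ∂μ := by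
      rw [← hsplitT, ← hsplitB, Set.inter_comm]; ring
    have hfin1 : μ ((t +ᵥ B n) \ B n) < ⊤ :=
      ((measure_mono ((Set.subset_union_left).trans (hdiffsub n))).trans_lt
        (lt_top_iff_ne_top.mpr (hbfin n)))
    have hfin2 : μ (B n \ (t +ᵥ B n)) < ⊤ :=
      ((measure_mono ((Set.subset_union_right).trans (hdiffsub n))).trans_lt
        (lt_top_iff_ne_top.mpr (hbfin n)))
    have hn1 : ‖∫ v in (t +ᵥ B n) \ B n, w v ∂μ‖ ≤ C * (μ ((t +ᵥ B n) \ B n)).toReal :=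
      norm_setIntegral_le_of_norm_le_const hfin1
        (fun x _ => hwb x)
    have hn2 : ‖∫ v in B n \ (t +ᵥ B n), w v ∂μ‖ ≤ C * (μ (B n \ (t +ᵥ B n))).toReal :=
      norm_setIntegral_le_of_norm_le_const hfin2
        (fun x _ => hwb x)
    have hm1 : (μ ((t +ᵥ B n) \ B n)).toReal ≤ (μ (vhBoundary K (A n))).toReal :=
      ENNReal.toReal_mono (hbfin n)
        (measure_mono ((Set.subset_union_left).trans (hdiffsub n)))
    have hm2 : (μ (B n \ (t +ᵥ B n))).toReal ≤ (μ (vhBoundary K (A n))).toReal :=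
      ENNReal.toReal_mono (hbfin n)
        (measure_mono ((Set.subset_union_right).trans (hdiffsub n)))
    have hnormd : ‖d n‖ = (μ (A n)).toReal⁻¹ *
        ‖∫ v in t +ᵥ B n, w v ∂μ - ∫ v in B n, w v ∂μ‖ := by
      rw [hd]
      simp only [norm_smul, Real.norm_eq_abs, abs_inv, abs_of_nonneg ENNReal.toReal_nonneg]
    rw [hnormd, hdiff, ENNReal.toReal_div]
    have hle : ‖∫ v in (t +ᵥ B n) \ B n, w v ∂μ - ∫ v in B n \ (t +ᵥ B n), w v ∂μ‖
        ≤ 2 * C * (μ (vhBoundary K (A n))).toReal := by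
      calc ‖∫ v in (t +ᵥ B n) \ B n, w v ∂μ - ∫ v in B n \ (t +ᵥ B n), w v ∂μ‖
          ≤ ‖∫ v in (t +ᵥ B n) \ B n, w v ∂μ‖ + ‖∫ v in B n \ (t +ᵥ B n), w v ∂μ‖ :=
            norm_sub_le _ _
        _ ≤ C * (μ (vhBoundary K (A n))).toReal + C * (μ (vhBoundary K (A n))).toReal := by
            gcongr
            exacts [hn1.trans (by gcongr), hn2.trans (by gcongr)]
        _ = 2 * C * (μ (vhBoundary K (A n))).toReal := by ring
    calc (μ (A n)).toReal⁻¹ * ‖∫ v in (t +ᵥ B n) \ B n, w v ∂μ - ∫ v in B n \ (t +ᵥ B n), w v ∂μ‖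
        ≤ (μ (A n)).toReal⁻¹ * (2 * C * (μ (vhBoundary K (A n))).toReal) := by
          gcongr
      _ = 2 * C * ((μ (vhBoundary K (A n))).toReal / (μ (A n)).toReal) := by ring
  -- d n tends to 0
  have hd0 : Tendsto d atTop (nhds 0) := by
    have hvh : Tendsto (fun n => μ (vhBoundary K (A n)) / μ (A n)) atTop (nhds 0) := hAvh K hK
    have hvhr : Tendsto (fun n => (μ (vhBoundary K (A n)) / μ (A n)).toReal) atTop (nhds 0) := by
      have := (ENNReal.tendsto_toReal (by simp : (0:ENNReal) ≠ ⊤)).comp hvh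
      simpa [Function.comp_def, -ENNReal.toReal_div] using this
    have hb2 : Tendsto (fun n => (2 * C) * (μ (vhBoundary K (A n)) / μ (A n)).toReal)
        atTop (nhds 0) := by
      have := hvhr.const_mul (2 * C)
      simpa using this
    exact squeeze_zero_norm hbound hb2
  -- the hypothesis sequence, rewritten over B n
  have hIeq : ∀ n, (μ (A n)).toReal⁻¹ • ∫ s in A n, f s * g (t - s) ∂μ
      = (μ (A n)).toReal⁻¹ • ∫ v in B n, w v ∂μ := by
    intro n
    rw [hw]
    congr 1
    rw [hBres n]
  -- put everything together
  have htarget : ∀ n, (μ (-(A n))).toReal⁻¹ • ∫ s in -(A n), g s * f (t - s) ∂μ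
      = ((μ (A n)).toReal⁻¹ • ∫ v in B n, w v ∂μ) + d n := by
    intro n
    rw [Measure.measure_neg, key1 n, hd]
    rw [← smul_add]
    congr 1
    ring
  have hfinal : Tendsto (fun n => ((μ (A n)).toReal⁻¹ • ∫ v in B n, w v ∂μ) + d n)
      atTop (nhds (F t + 0)) := by
    refine Tendsto.add ?_ hd0
    have := h t
    simpa only [hIeq] using this
  rw [add_zero] at hfinal
  exact hfinal.congr (fun n => (htarget n).symm)
end
end

section
/- Let f, g ∈ Cu(G) and let A = (A_n) be a van Hove sequence. If the Eberlein convolution f ⊛_A g̃ exists, then the Eberlein convolution g ⊛_A f̃ exists and g ⊛_A f̃ = (f ⊛_A g̃)~, i.e. (g ⊛_A f̃)(t) = conj((f ⊛_A g̃)(−t)) for all t ∈ G. -/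
open MeasureTheory Filter Topology Pointwise ComplexConjugate
open scoped BigOperators

noncomputable section

variable {G : Type*} [AddCommGroup G] [UniformSpace G] [IsUniformAddGroup G]
  [LocallyCompactSpace G] [SecondCountableTopology G]
  [MeasurableSpace G] [BorelSpace G]

section Aux

set_option linter.unusedSectionVars false

/-- Half of the symmetric-difference bound: comparing the integral over `S` with the
integral over `S ∩ T`. -/
lemma aux_half {μ : Measure G} {S T : Set G} (hS : μ S ≠ ⊤)
    {H : G → ℂ} (hH : Continuous H) {C : ℝ} (hC : ∀ x, ‖H x‖ ≤ C) :
    ‖(∫ u in S, H u ∂μ) - ∫ u in S ∩ T, H u ∂μ‖ ≤ C * (μ (S \ T)).toReal := by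
  have hle : μ.restrict (S ∩ T) ≤ μ.restrict S :=
    Measure.restrict_mono Set.inter_subset_left le_rfl
  have hfinS : IsFiniteMeasure (μ.restrict S) :=
    ⟨by simpa [Measure.restrict_apply_univ, lt_top_iff_ne_top] using hS⟩
  have hfinI : IsFiniteMeasure (μ.restrict (S ∩ T)) :=
    ⟨lt_of_le_of_lt (hle Set.univ)
      (by simpa [Measure.restrict_apply_univ, lt_top_iff_ne_top] using hS)⟩
  set δ := μ.restrict S - μ.restrict (S ∩ T) with hδ
  have hδle : δ ≤ μ.restrict S := Measure.sub_le
  have hfinδ : IsFiniteMeasure δ :=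
    ⟨lt_of_le_of_lt (hδle Set.univ)
      (by simpa [Measure.restrict_apply_univ, lt_top_iff_ne_top] using hS)⟩
  have hsum : δ + μ.restrict (S ∩ T) = μ.restrict S := Measure.sub_add_cancel_of_le hle
  have hint : ∀ (ν : Measure G), IsFiniteMeasure ν → Integrable H ν := by
    intro ν hν
    exact Integrable.mono' (integrable_const C) hH.aestronglyMeasurable
      (Filter.Eventually.of_forall hC)
  have h1 : ∫ u in S, H u ∂μ = (∫ u, H u ∂δ) + ∫ u in S ∩ T, H u ∂μ := by
    conv_lhs => rw [← hsum]
    exact integral_add_measure (hint δ hfinδ) (hint _ hfinI)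
  have h2 : ‖∫ u, H u ∂δ‖ ≤ C * (δ Set.univ).toReal :=
    norm_integral_le_of_norm_le_const (Filter.Eventually.of_forall hC)
  have h3 : δ Set.univ ≤ μ (S \ T) := by
    rw [hδ, Measure.sub_apply MeasurableSet.univ hle]
    rw [Measure.restrict_apply_univ, Measure.restrict_apply_univ]
    refine tsub_le_iff_right.mpr ?_
    calc μ S = μ ((S \ T) ∪ (S ∩ T)) := by rw [Set.diff_union_inter]
    _ ≤ μ (S \ T) + μ (S ∩ T) := measure_union_le _ _
  have hC0 : 0 ≤ C := le_trans (norm_nonneg _) (hC 0)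
  have h4 : (δ Set.univ).toReal ≤ (μ (S \ T)).toReal :=
    ENNReal.toReal_mono (ne_top_of_le_ne_top hS (measure_mono Set.diff_subset)) h3
  rw [h1, add_sub_cancel_right]
  exact le_trans h2 (by nlinarith)

/-- Symmetric-difference bound for set integrals of a bounded continuous function. -/
lemma aux_diff {μ : Measure G} {S T : Set G} (hS : μ S ≠ ⊤) (hT : μ T ≠ ⊤)
    {H : G → ℂ} (hH : Continuous H) {C : ℝ} (hC : ∀ x, ‖H x‖ ≤ C) :
    ‖(∫ u in S, H u ∂μ) - ∫ u in T, H u ∂μ‖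
      ≤ C * (μ (S \ T)).toReal + C * (μ (T \ S)).toReal := by
  have h1 := aux_half (μ := μ) (S := S) (T := T) hS hH hC
  have h2 := aux_half (μ := μ) (S := T) (T := S) hT hH hC
  rw [Set.inter_comm T S] at h2
  calc ‖(∫ u in S, H u ∂μ) - ∫ u in T, H u ∂μ‖
      = ‖((∫ u in S, H u ∂μ) - ∫ u in S ∩ T, H u ∂μ)
          - ((∫ u in T, H u ∂μ) - ∫ u in S ∩ T, H u ∂μ)‖ := by ring_nf
    _ ≤ _ := le_trans (norm_sub_le _ _) (add_le_add h1 h2)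

end Aux

/-- if `f ⊛_A g̃` exists then `g ⊛_A f̃` exists and equals `(f ⊛_A g̃)~`. -/
theorem stmt2 (μ : Measure G) [μ.IsAddHaarMeasure] (A : ℕ → Set G)
    (hA : IsVanHove μ A) (f g : G → ℂ) (hf : IsCu f) (hg : IsCu g) (F : G → ℂ)
    (h : EberleinTendsto μ A f (tilde g) F) :
    EberleinTendsto μ A g (tilde f) (tilde F) := by
  obtain ⟨hAc, hApos, hAvh⟩ := hA
  intro t
  have hfc : Continuous f := hf.1.continuous
  have hgc : Continuous g := hg.1.continuous
  obtain ⟨Cf, hCf⟩ := hf.2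
  obtain ⟨Cg, hCg⟩ := hg.2
  set H : G → ℂ := fun u => g u * tilde f (t - u) with hHdef
  have hHc : Continuous H := by
    apply hgc.mul
    exact (continuous_star.comp (hfc.comp continuous_neg)).comp
      (continuous_const.sub continuous_id)
  set C : ℝ := Cg * Cf with hCdef
  have hCf0 : 0 ≤ Cf := le_trans (norm_nonneg _) (hCf 0)
  have hCg0 : 0 ≤ Cg := le_trans (norm_nonneg _) (hCg 0)
  have hC0 : 0 ≤ C := mul_nonneg hCg0 hCf0
  have hCH : ∀ x, ‖H x‖ ≤ C := by
    intro x
    calc ‖H x‖ = ‖g x‖ * ‖f (-(t - x))‖ := by simp [hHdef, tilde, norm_mul]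
      _ ≤ Cg * Cf := mul_le_mul (hCg x) (hCf _) (norm_nonneg _) hCg0
  have hTc : ∀ n, IsCompact (t +ᵥ A n) := fun n => (hAc n).vadd t
  have hSfin : ∀ n, μ (A n) ≠ ⊤ := fun n => ((hAc n).measure_lt_top).ne
  have hTfin : ∀ n, μ (t +ᵥ A n) ≠ ⊤ := fun n => ((hTc n).measure_lt_top).ne
  have emb : MeasurableEmbedding (fun s : G => t + s) :=
    (Homeomorph.addLeft t).measurableEmbedding
  have htrans : ∀ n, (∫ u in t +ᵥ A n, H u ∂μ) = ∫ s in A n, H (t + s) ∂μ := by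
    intro n
    have hpre : (fun s : G => t + s) ⁻¹' (t +ᵥ A n) = A n := by
      ext x
      simp [Set.mem_vadd_set, vadd_eq_add]
    conv_lhs => rw [← map_add_left_eq_self μ t]
    rw [emb.setIntegral_map, hpre]
  have hrw : ∀ n, (starRingEnd ℂ)
        ((μ (A n)).toReal⁻¹ • ∫ s in A n, f s * tilde g (-t - s) ∂μ)
      = (μ (A n)).toReal⁻¹ • ∫ u in t +ᵥ A n, H u ∂μ := by
    intro n
    rw [htrans n]
    have hsm : ∀ (r : ℝ) (z : ℂ), (starRingEnd ℂ) (r • z) = r • (starRingEnd ℂ) z := by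
      intro r z; simp [Complex.real_smul, map_mul, Complex.conj_ofReal]
    rw [hsm, ← integral_conj]
    congr 1
    have hpt : ∀ s : G, (starRingEnd ℂ) (f s * tilde g (-t - s)) = H (t + s) := by
      intro s
      have h1 : -(-t - s) = t + s := by abel
      have h2 : t - (t + s) = -s := by abel
      have h3 : -(-s : G) = s := by abel
      simp only [hHdef, tilde, map_mul, Complex.conj_conj, h1, h2, h3]
      ring
    simp only [hpt]
  have hc : Tendsto (fun n => (μ (A n)).toReal⁻¹ • ∫ u in t +ᵥ A n, H u ∂μ)
      atTop (nhds (tilde F t)) := by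
    have h0 := h (-t)
    have h1 : Tendsto (fun n => (starRingEnd ℂ)
        ((μ (A n)).toReal⁻¹ • ∫ s in A n, f s * tilde g (-t - s) ∂μ))
        atTop (nhds ((starRingEnd ℂ) (F (-t)))) :=
      ((Complex.continuous_conj).tendsto (F (-t))).comp h0
    simp only [hrw] at h1
    exact h1
  have hK : IsCompact ({t, -t} : Set G) := (Set.toFinite _).isCompact
  have hbd := hAvh {t, -t} hK
  have hlt : ∀ᶠ n in atTop, μ (vhBoundary {t, -t} (A n)) / μ (A n) < 1 :=
    hbd.eventually_lt_const (by norm_num)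
  have hsub1 : ∀ n, (t +ᵥ A n) \ A n ⊆ vhBoundary {t, -t} (A n) := by
    intro n x hx
    obtain ⟨hx1, hx2⟩ := hx
    obtain ⟨a, ha, rfl⟩ := hx1
    refine Or.inl ⟨subset_closure ?_, hx2⟩
    simp only [vadd_eq_add]
    rw [add_comm t a]
    exact Set.add_mem_add ha (by simp)
  have hsub2 : ∀ n, A n \ (t +ᵥ A n) ⊆ vhBoundary {t, -t} (A n) := by
    intro n x hx
    refine Or.inr ⟨?_, subset_closure hx.1⟩
    refine Set.mem_sub.mpr ⟨x - t, ?_, -t, by simp, by abel⟩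
    intro hmem
    exact hx.2 ⟨x - t, hmem, by simp only [vadd_eq_add]; abel⟩
  have hd : Tendsto (fun n => (μ (A n)).toReal⁻¹ •
      ((∫ u in A n, H u ∂μ) - ∫ u in t +ᵥ A n, H u ∂μ)) atTop (nhds 0) := by
    apply squeeze_zero_norm'
      (a := fun n => 2 * C * (μ (vhBoundary {t, -t} (A n)) / μ (A n)).toReal)
    · filter_upwards [hlt] with n hn
      have hbfin : μ (vhBoundary {t, -t} (A n)) ≠ ⊤ := by
        intro hcon
        rw [hcon, ENNReal.top_div_of_ne_top (hSfin n)] at hn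
        exact (not_top_lt hn)
      have hr0 : (0:ℝ) ≤ (μ (A n)).toReal⁻¹ := inv_nonneg.mpr ENNReal.toReal_nonneg
      have hdiff := aux_diff (hSfin n) (hTfin n) hHc hCH
      have hb1 : (μ (A n \ (t +ᵥ A n))).toReal
          ≤ (μ (vhBoundary {t, -t} (A n))).toReal :=
        ENNReal.toReal_mono hbfin (measure_mono (hsub2 n))
      have hb2 : (μ ((t +ᵥ A n) \ A n)).toReal
          ≤ (μ (vhBoundary {t, -t} (A n))).toReal :=
        ENNReal.toReal_mono hbfin (measure_mono (hsub1 n))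
      have hkey : ‖(∫ u in A n, H u ∂μ) - ∫ u in t +ᵥ A n, H u ∂μ‖
          ≤ 2 * C * (μ (vhBoundary {t, -t} (A n))).toReal :=
        le_trans hdiff (by nlinarith)
      rw [norm_smul, Real.norm_of_nonneg hr0]
      calc (μ (A n)).toReal⁻¹ * ‖(∫ u in A n, H u ∂μ) - ∫ u in t +ᵥ A n, H u ∂μ‖
          ≤ (μ (A n)).toReal⁻¹ * (2 * C * (μ (vhBoundary {t, -t} (A n))).toReal) :=
            mul_le_mul_of_nonneg_left hkey hr0
        _ = 2 * C * (μ (vhBoundary {t, -t} (A n)) / μ (A n)).toReal := by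
            rw [ENNReal.toReal_div, div_eq_mul_inv]; ring
    · have h0 := (ENNReal.tendsto_toReal (ENNReal.zero_ne_top)).comp hbd
      simp only [Function.comp_def, ENNReal.toReal_zero] at h0
      have h1 := h0.const_mul (2 * C)
      simpa only [mul_zero] using h1
  have heq : ∀ n, ((μ (A n)).toReal⁻¹ • ∫ u in t +ᵥ A n, H u ∂μ)
      + (μ (A n)).toReal⁻¹ • ((∫ u in A n, H u ∂μ) - ∫ u in t +ᵥ A n, H u ∂μ)
      = (μ (A n)).toReal⁻¹ • ∫ s in A n, H s ∂μ := by
    intro n; rw [smul_sub]; abel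
  have final : Tendsto (fun n => (μ (A n)).toReal⁻¹ • ∫ s in A n, H s ∂μ)
      atTop (nhds (tilde F t)) := by
    have h1 := hc.add hd
    rw [add_zero] at h1
    simpa only [heq] using h1
  exact final
end
end

section
/- Let f, g ∈ Cu(G) and let A be a van Hove sequence such that the Eberlein convolution f ⊛_A g exists. Then f ⊛_A g ∈ Cu(G); more precisely, ‖f ⊛_A g‖_∞ ≤ ‖f‖_∞ · ‖g‖_∞ and for every t ∈ G one has ‖T_t(f ⊛_A g) − (f ⊛_A g)‖_∞ ≤ ‖T_t f − f‖_∞ · ‖g‖_∞; in particular f ⊛_A g is bounded and uniformly continuous. -/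
open MeasureTheory Filter Topology Pointwise ComplexConjugate
open scoped BigOperators

noncomputable section

variable {G : Type*} [AddCommGroup G] [UniformSpace G] [IsUniformAddGroup G]
  [LocallyCompactSpace G] [SecondCountableTopology G]
  [MeasurableSpace G] [BorelSpace G]

open scoped Uniformity

section AuxLemmas

variable {G : Type*} [AddCommGroup G] [UniformSpace G] [IsUniformAddGroup G]
  [LocallyCompactSpace G] [SecondCountableTopology G]
  [MeasurableSpace G] [BorelSpace G]

lemma supN_nonneg (f : G → ℂ) : 0 ≤ supN f :=
  Real.iSup_nonneg fun _ => norm_nonneg _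

lemma le_supN {f : G → ℂ} {C : ℝ} (hC : ∀ x, ‖f x‖ ≤ C) (x : G) : ‖f x‖ ≤ supN f :=
  le_ciSup ⟨C, by rintro y ⟨x, rfl⟩; exact hC x⟩ x

lemma supN_le {f : G → ℂ} {C : ℝ} (h0 : 0 ≤ C) (hC : ∀ x, ‖f x‖ ≤ C) : supN f ≤ C :=
  Real.iSup_le hC h0

lemma restrict_closure_eq {μ : Measure G} (s : Set G) (hfin : μ s ≠ ⊤)
    (hcl : μ (closure s) = μ s) : μ.restrict (closure s) = μ.restrict s := by
  set T : Set G := toMeasurable μ s ∩ closure s with hTdef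
  have hTm : MeasurableSet T :=
    (measurableSet_toMeasurable μ s).inter isClosed_closure.measurableSet
  have hsT : s ⊆ T := Set.subset_inter (subset_toMeasurable μ s) subset_closure
  have hμT : μ T = μ s :=
    le_antisymm ((measure_mono Set.inter_subset_left).trans (measure_toMeasurable s).le)
      (measure_mono hsT)
  have hTsub : T ⊆ closure s := Set.inter_subset_right
  have hnull : μ (closure s \ T) = 0 := by
    rw [measure_diff hTsub hTm.nullMeasurableSet (by rw [hμT]; exact hfin), hμT, hcl, tsub_self]
  have h1 : μ.restrict (closure s) = μ.restrict T := by
    refine Measure.restrict_congr_set ?_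
    refine (MeasureTheory.ae_eq_set).2 ⟨hnull, ?_⟩
    rw [Set.diff_eq_empty.2 hTsub]
    exact measure_empty
  have h2 : μ.restrict T = μ.restrict s := by
    rw [hTdef, Set.inter_comm, ← Measure.restrict_restrict isClosed_closure.measurableSet,
      Measure.restrict_toMeasurable hfin, Measure.restrict_restrict isClosed_closure.measurableSet,
      Set.inter_eq_self_of_subset_right subset_closure]
  rw [h1, h2]

lemma setIntegral_vadd_aux {μ : Measure G} [μ.IsAddHaarMeasure] (t : G) (s : Set G) (h : G → ℂ) :
    ∫ u in t +ᵥ s, h u ∂μ = ∫ u in s, h (t + u) ∂μ := by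
  have := (measurePreserving_add_left μ t).setIntegral_image_emb
    (MeasurableEquiv.addLeft t).measurableEmbedding h s
  simpa [← Set.image_vadd, Set.image_image] using this

lemma key_est {μ : Measure G} [μ.IsAddHaarMeasure] {f g : G → ℂ}
    (hfc : Continuous f) (hgc : Continuous g) {Cf Cg Dt : ℝ}
    (hCf : ∀ y, ‖f y‖ ≤ Cf) (hCg : ∀ y, ‖g y‖ ≤ Cg)
    (t x : G) (hD : ∀ y, ‖f (y - t) - f y‖ ≤ Dt)
    {B : Set G} (hB : IsCompact B) (hBc : IsClosed B) (hB0 : 0 < μ B) :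
    ‖((μ B).toReal⁻¹ • ∫ s in B, f s * g (x - t - s) ∂μ)
      - (μ B).toReal⁻¹ • ∫ s in B, f s * g (x - s) ∂μ‖
      ≤ Dt * Cg + Cf * Cg *
        (((μ ((t +ᵥ B) \ B)).toReal + (μ (B \ (t +ᵥ B))).toReal) / (μ B).toReal) := by
  have hCg0 : 0 ≤ Cg := le_trans (norm_nonneg _) (hCg 0)
  have hCf0 : 0 ≤ Cf := le_trans (norm_nonneg _) (hCf 0)
  have hDt0 : 0 ≤ Dt := le_trans (norm_nonneg _) (hD 0)
  set m : ℝ := (μ B).toReal with hmdef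
  have hm : 0 < m := ENNReal.toReal_pos hB0.ne' hB.measure_lt_top.ne
  set S : Set G := t +ᵥ B with hSdef
  have hSc : IsClosed S := hBc.vadd t
  have hScpt : IsCompact S := hB.vadd t
  have hμS : μ S = μ B := measure_vadd (μ := μ) t B
  set h1 : G → ℂ := fun u => f (u - t) * g (x - u) with hh1
  set h2 : G → ℂ := fun u => f u * g (x - u) with hh2
  have hc1 : Continuous h1 := ((hfc.comp (continuous_id.sub continuous_const)).mul
    (hgc.comp (continuous_const.sub continuous_id)))
  have hc2 : Continuous h2 := (hfc.mul (hgc.comp (continuous_const.sub continuous_id)))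
  -- change of variables
  have hI1 : ∫ s in B, f s * g (x - t - s) ∂μ = ∫ u in S, h1 u ∂μ := by
    rw [hSdef, setIntegral_vadd_aux]
    congr 1 with u
    simp only [hh1, add_sub_cancel_left, sub_add_eq_sub_sub]
  -- integrability
  have hiU1 : IntegrableOn h1 (S ∪ B) μ :=
    hc1.continuousOn.integrableOn_compact' (hScpt.union hB) (hSc.union hBc).measurableSet
  have hiU2 : IntegrableOn h2 (S ∪ B) μ :=
    hc2.continuousOn.integrableOn_compact' (hScpt.union hB) (hSc.union hBc).measurableSet
  have hi1S : IntegrableOn h1 S μ := hiU1.mono_set Set.subset_union_left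
  have hi2S : IntegrableOn h2 S μ := hiU2.mono_set Set.subset_union_left
  have hi2B : IntegrableOn h2 B μ := hiU2.mono_set Set.subset_union_right
  -- decomposition
  have hdS : (∫ u in S ∩ B, h2 u ∂μ) + ∫ u in S \ B, h2 u ∂μ = ∫ u in S, h2 u ∂μ :=
    integral_inter_add_diff hBc.measurableSet hi2S
  have hdB : (∫ u in B ∩ S, h2 u ∂μ) + ∫ u in B \ S, h2 u ∂μ = ∫ u in B, h2 u ∂μ :=
    integral_inter_add_diff hSc.measurableSet hi2B
  have hsplit : (∫ u in S, h1 u ∂μ) - ∫ u in B, h2 u ∂μ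
      = (∫ u in S, (h1 u - h2 u) ∂μ) + ((∫ u in S \ B, h2 u ∂μ) - ∫ u in B \ S, h2 u ∂μ) := by
    rw [integral_sub hi1S hi2S, ← hdS, ← hdB, Set.inter_comm]
    ring
  -- norm bounds
  have hn1 : ‖∫ u in S, (h1 u - h2 u) ∂μ‖ ≤ Dt * Cg * m := by
    have hb : ∀ u ∈ S, ‖h1 u - h2 u‖ ≤ Dt * Cg := fun u _ => by
      have he : h1 u - h2 u = (f (u - t) - f u) * g (x - u) := by rw [hh1, hh2]; ring
      rw [he, norm_mul]
      exact mul_le_mul (hD u) (hCg _) (norm_nonneg _) hDt0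
    have h : ‖∫ u in S, (h1 u - h2 u) ∂μ‖ ≤ Dt * Cg * (μ S).toReal :=
      norm_setIntegral_le_of_norm_le_const (μ := μ) (s := S)
      (f := fun u => h1 u - h2 u) (C := Dt * Cg)
      (by rw [hμS]; exact hB.measure_lt_top) hb
    rwa [hμS] at h
  have hn2 : ‖∫ u in S \ B, h2 u ∂μ‖ ≤ Cf * Cg * (μ (S \ B)).toReal := by
    refine norm_setIntegral_le_of_norm_le_const (μ := μ) (s := S \ B) (C := Cf * Cg)
      (lt_of_le_of_lt (measure_mono Set.diff_subset) (by rw [hμS]; exact hB.measure_lt_top))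
      (fun u _ => by
        rw [hh2, norm_mul]
        exact mul_le_mul (hCf _) (hCg _) (norm_nonneg _) hCf0)
  have hn3 : ‖∫ u in B \ S, h2 u ∂μ‖ ≤ Cf * Cg * (μ (B \ S)).toReal := by
    refine norm_setIntegral_le_of_norm_le_const (μ := μ) (s := B \ S) (C := Cf * Cg)
      (lt_of_le_of_lt (measure_mono Set.diff_subset) hB.measure_lt_top)
      (fun u _ => by
        rw [hh2, norm_mul]
        exact mul_le_mul (hCf _) (hCg _) (norm_nonneg _) hCf0)
  -- assemble
  have hI2 : ∫ s in B, f s * g (x - s) ∂μ = ∫ u in B, h2 u ∂μ := rfl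
  rw [hI1, hI2, ← smul_sub, hsplit]
  have hnorm : ‖(μ B).toReal⁻¹ • ((∫ u in S, (h1 u - h2 u) ∂μ)
      + ((∫ u in S \ B, h2 u ∂μ) - ∫ u in B \ S, h2 u ∂μ))‖
      ≤ m⁻¹ * (Dt * Cg * m + (Cf * Cg * (μ (S \ B)).toReal + Cf * Cg * (μ (B \ S)).toReal)) := by
    rw [norm_smul, Real.norm_eq_abs, abs_of_nonneg (inv_nonneg.2 hm.le)]
    refine mul_le_mul_of_nonneg_left ?_ (inv_nonneg.2 hm.le)
    refine (norm_add_le _ _).trans (add_le_add hn1 ?_)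
    exact (norm_sub_le _ _).trans (add_le_add hn2 hn3)
  refine hnorm.trans ?_
  rw [mul_add]
  have e1 : m⁻¹ * (Dt * Cg * m) = Dt * Cg := by field_simp
  have e2 : m⁻¹ * (Cf * Cg * (μ (S \ B)).toReal + Cf * Cg * (μ (B \ S)).toReal)
      = Cf * Cg * (((μ (S \ B)).toReal + (μ (B \ S)).toReal) / m) := by
    field_simp
  rw [e1, e2]

end AuxLemmas

/-- an existing Eberlein convolution of `Cu` functions is again in `Cu(G)`,
with the stated norm bounds. -/
theorem stmt3 (μ : Measure G) [μ.IsAddHaarMeasure] (A : ℕ → Set G)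
    (hA : IsVanHove μ A) (f g : G → ℂ) (hf : IsCu f) (hg : IsCu g) (F : G → ℂ)
    (h : EberleinTendsto μ A f g F) :
    IsCu F ∧ supN F ≤ supN f * supN g ∧
      ∀ t : G, supN (fun x => shiftBy t F x - F x) ≤
        supN (fun x => shiftBy t f x - f x) * supN g := by
  classical
  obtain ⟨hfu, Cf0, hCf0⟩ := hf
  obtain ⟨hgu, Cg0, hCg0⟩ := hg
  have hfc : Continuous f := hfu.continuous
  have hgc : Continuous g := hgu.continuous
  set Cf : ℝ := supN f with hCfdef
  set Cg : ℝ := supN g with hCgdef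
  have hCf : ∀ y, ‖f y‖ ≤ Cf := le_supN hCf0
  have hCg : ∀ y, ‖g y‖ ≤ Cg := le_supN hCg0
  have hCf0' : 0 ≤ Cf := supN_nonneg f
  have hCg0' : 0 ≤ Cg := supN_nonneg g
  obtain ⟨hAcpt, hApos, hAvh⟩ := hA
  -- Step B : pointwise bound on F
  have stepB : ∀ t, ‖F t‖ ≤ Cf * Cg := by
    intro t
    refine le_of_tendsto (h t).norm (Filter.Eventually.of_forall fun n => ?_)
    have hm : 0 < (μ (A n)).toReal :=
      ENNReal.toReal_pos (hApos n).ne' (hAcpt n).measure_lt_top.ne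
    have hint : ‖∫ s in A n, f s * g (t - s) ∂μ‖ ≤ Cf * Cg * (μ (A n)).toReal := by
      refine norm_setIntegral_le_of_norm_le_const (hAcpt n).measure_lt_top (fun s _ => ?_)
      · rw [norm_mul]
        exact mul_le_mul (hCf _) (hCg _) (norm_nonneg _) hCf0'
    rw [norm_smul, Real.norm_eq_abs, abs_of_nonneg (inv_nonneg.2 hm.le)]
    calc (μ (A n)).toReal⁻¹ * ‖∫ s in A n, f s * g (t - s) ∂μ‖
        ≤ (μ (A n)).toReal⁻¹ * (Cf * Cg * (μ (A n)).toReal) :=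
          mul_le_mul_of_nonneg_left hint (inv_nonneg.2 hm.le)
      _ = Cf * Cg := by field_simp
  -- Step C : key shift estimate
  have stepC : ∀ t x, ‖F (x - t) - F x‖ ≤ supN (fun y => f (y - t) - f y) * Cg := by
    intro t x
    set Dt : ℝ := supN (fun y => f (y - t) - f y) with hDtdef
    have hD : ∀ y, ‖f (y - t) - f y‖ ≤ Dt :=
      le_supN (C := Cf + Cf) (fun y => (norm_sub_le _ _).trans (add_le_add (hCf _) (hCf _)))
    set K : Set G := {t, -t} with hKdef
    have hK : IsCompact K := (Set.toFinite K).isCompact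
    have hVH := hAvh K hK
    set e : ℕ → ℝ := fun n => (μ (vhBoundary K (A n)) / μ (A n)).toReal with hedef
    have he : Tendsto e atTop (𝓝 0) := by
      have := (ENNReal.tendsto_toReal (a := 0) (by simp)).comp hVH
      simpa [hedef, Function.comp_def] using this
    have hbound : ∀ n, ‖((μ (A n)).toReal⁻¹ • ∫ s in A n, f s * g (x - t - s) ∂μ)
        - (μ (A n)).toReal⁻¹ • ∫ s in A n, f s * g (x - s) ∂μ‖
        ≤ Dt * Cg + 2 * (Cf * Cg) * e n := by
      intro n
      set B : Set G := closure (A n) with hBdef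
      have hBcpt : IsCompact B := (hAcpt n).closure
      have hBc : IsClosed B := isClosed_closure
      have hμB : μ B = μ (A n) := (hAcpt n).measure_closure μ
      have hres : μ.restrict B = μ.restrict (A n) :=
        restrict_closure_eq (A n) (hAcpt n).measure_lt_top.ne hμB
      have hterm : ∀ (y : G), ((μ (A n)).toReal⁻¹ • ∫ s in A n, f s * g (y - s) ∂μ)
          = (μ B).toReal⁻¹ • ∫ s in B, f s * g (y - s) ∂μ := by
        intro y
        rw [← hμB, ← hres]
      have hB0 : 0 < μ B := hμB ▸ hApos n
      have hkey := key_est hfc hgc hCf hCg t x hD hBcpt hBc hB0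
      have hsub1 : (t +ᵥ B) \ B ⊆ vhBoundary K (A n) := by
        rintro u ⟨hu1, hu2⟩
        refine Or.inl ⟨?_, fun hc => hu2 (subset_closure hc)⟩
        have : t +ᵥ B = closure (t +ᵥ A n) := by rw [hBdef, closure_vadd]
        rw [this] at hu1
        refine closure_mono ?_ hu1
        rintro v ⟨w, hw, rfl⟩
        simpa [add_comm] using Set.add_mem_add hw (Set.mem_insert t ({-t} : Set G))
      have hsub2 : B \ (t +ᵥ B) ⊆ vhBoundary K (A n) := by
        rintro u ⟨hu1, hu2⟩
        refine Or.inr ⟨?_, hu1⟩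
        have hut : u - t ∈ (A n)ᶜ := by
          intro hc
          exact hu2 ⟨u - t, subset_closure hc, by simp⟩
        have : u = (u - t) - (-t) := by abel
        rw [this]
        exact Set.sub_mem_sub hut (by simp [hKdef])
      have hvfin : μ (vhBoundary K (A n)) ≠ ⊤ := by
        have hsub : vhBoundary K (A n) ⊆ closure (A n + K) ∪ closure (A n) := by
          rintro u (⟨h1, _⟩ | ⟨_, h2⟩)
          · exact Or.inl h1
          · exact Or.inr h2
        refine (lt_of_le_of_lt (measure_mono hsub) ?_).ne
        exact (((hAcpt n).add hK).closure.union (hAcpt n).closure).measure_lt_top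
      have hμD1 : (μ ((t +ᵥ B) \ B)).toReal ≤ (μ (vhBoundary K (A n))).toReal :=
        ENNReal.toReal_mono hvfin (measure_mono hsub1)
      have hμD2 : (μ (B \ (t +ᵥ B))).toReal ≤ (μ (vhBoundary K (A n))).toReal :=
        ENNReal.toReal_mono hvfin (measure_mono hsub2)
      have hm : 0 < (μ B).toReal := ENNReal.toReal_pos hB0.ne' hBcpt.measure_lt_top.ne
      have heq : e n = (μ (vhBoundary K (A n))).toReal / (μ B).toReal := by
        simp only [hedef, ENNReal.toReal_div, hμB]
      rw [hterm (x - t), hterm x]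
      refine hkey.trans ?_
      refine add_le_add le_rfl ?_
      rw [heq]
      have h2e : ((μ ((t +ᵥ B) \ B)).toReal + (μ (B \ (t +ᵥ B))).toReal) / (μ B).toReal
          ≤ 2 * ((μ (vhBoundary K (A n))).toReal / (μ B).toReal) := by
        rw [mul_div_assoc']
        exact (div_le_div_iff_of_pos_right hm).2 (by linarith)
      calc Cf * Cg * (((μ ((t +ᵥ B) \ B)).toReal + (μ (B \ (t +ᵥ B))).toReal) / (μ B).toReal)
          ≤ Cf * Cg * (2 * ((μ (vhBoundary K (A n))).toReal / (μ B).toReal)) :=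
            mul_le_mul_of_nonneg_left h2e (mul_nonneg hCf0' hCg0')
        _ = 2 * (Cf * Cg) * ((μ (vhBoundary K (A n))).toReal / (μ B).toReal) := by ring
    have hlhs : Tendsto (fun n => ‖((μ (A n)).toReal⁻¹ • ∫ s in A n, f s * g (x - t - s) ∂μ)
        - (μ (A n)).toReal⁻¹ • ∫ s in A n, f s * g (x - s) ∂μ‖) atTop (𝓝 ‖F (x - t) - F x‖) :=
      ((h (x - t)).sub (h x)).norm
    have hrhs : Tendsto (fun n => Dt * Cg + 2 * (Cf * Cg) * e n) atTop (𝓝 (Dt * Cg)) := by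
      simpa only [mul_zero, add_zero] using (he.const_mul (2 * (Cf * Cg))).const_add (Dt * Cg)
    exact le_of_tendsto_of_tendsto' hlhs hrhs hbound
  -- uniform continuity of F
  have hFbdd : ∀ x, ‖F x‖ ≤ Cf * Cg := stepB
  have hUC : UniformContinuous F := by
    refine Metric.uniformity_basis_dist.tendsto_right_iff.2 fun ε hε => ?_
    set ε' : ℝ := ε / (2 * (Cg + 1)) with hε'def
    have hCg1 : 0 < Cg + 1 := by linarith
    have hε' : 0 < ε' := div_pos hε (by linarith)
    have hVmem : {q : ℂ × ℂ | dist q.1 q.2 ≤ ε'} ∈ 𝓤 ℂ :=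
      Metric.uniformity_basis_dist_le.mem_of_mem hε'
    have hW : ∀ᶠ p : G × G in 𝓤 G, dist (f p.1) (f p.2) ≤ ε' := hfu hVmem
    rw [uniformity_eq_comap_nhds_zero G, Filter.eventually_comap] at hW
    rw [uniformity_eq_comap_nhds_zero G, Filter.eventually_comap]
    filter_upwards [hW] with d hd p hp
    have hDd : supN (fun y => f (y - d) - f y) ≤ ε' := by
      refine Real.iSup_le (fun y => ?_) hε'.le
      rw [← dist_eq_norm]
      exact hd (y - d, y) (by simp)
    have hp1 : p.1 = p.2 - d := by rw [← hp]; abel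
    have hle : dist (F p.1) (F p.2) ≤ supN (fun y => f (y - d) - f y) * Cg := by
      rw [dist_eq_norm, hp1]
      exact stepC d p.2
    show dist (F p.1) (F p.2) < ε
    calc dist (F p.1) (F p.2) ≤ supN (fun y => f (y - d) - f y) * Cg := hle
      _ ≤ ε' * Cg := mul_le_mul_of_nonneg_right hDd hCg0'
      _ ≤ ε' * (Cg + 1) := mul_le_mul_of_nonneg_left (by linarith) hε'.le
      _ = ε / 2 := by rw [hε'def]; field_simp
      _ < ε := by linarith
  refine ⟨⟨hUC, Cf * Cg, hFbdd⟩, ?_, ?_⟩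
  · exact supN_le (mul_nonneg hCf0' hCg0') hFbdd
  · intro t
    refine supN_le (mul_nonneg (supN_nonneg _) hCg0') fun x => ?_
    exact stepC t x
end
end

section
/- Let f, g ∈ Cu(G) and t ∈ G, and let A be a van Hove sequence. If the Eberlein convolution f ⊛_A g exists, then the Eberlein convolution (T_t f) ⊛_A g exists and (T_t f) ⊛_A g = T_t (f ⊛_A g). -/
open MeasureTheory Filter Topology Pointwise ComplexConjugate
open scoped BigOperators

noncomputable section

variable {G : Type*} [AddCommGroup G] [UniformSpace G] [IsUniformAddGroup G]
  [LocallyCompactSpace G] [SecondCountableTopology G]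
  [MeasurableSpace G] [BorelSpace G]

open scoped ENNReal

lemma restrict_closure_of_isCompact (μ : Measure G) [IsFiniteMeasureOnCompacts μ]
    {s : Set G} (hs : IsCompact s) : μ.restrict (closure s) = μ.restrict s := by
  ext T hT
  rw [Measure.restrict_apply hT, Measure.restrict_apply hT, Set.inter_comm T, Set.inter_comm T]
  have hcs : IsCompact (closure s) := hs.closure
  have hfin : μ (closure s) < ∞ := hcs.measure_lt_top
  have heq : μ (closure s) = μ s := hs.measure_closure μ
  have h1 : μ (closure s ∩ T) + μ (closure s \ T) = μ (closure s) :=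
    measure_inter_add_diff _ hT
  have h2 : μ (s ∩ T) + μ (s \ T) = μ s := measure_inter_add_diff _ hT
  have m1 : μ (s ∩ T) ≤ μ (closure s ∩ T) :=
    measure_mono (Set.inter_subset_inter_left _ subset_closure)
  have m2 : μ (s \ T) ≤ μ (closure s \ T) :=
    measure_mono (Set.diff_subset_diff_left subset_closure)
  by_contra hne
  have hlt : μ (s ∩ T) < μ (closure s ∩ T) := lt_of_le_of_ne m1 (Ne.symm hne)
  have hfin2 : μ (s \ T) ≠ ∞ :=
    (lt_of_le_of_lt (le_trans (measure_mono Set.diff_subset) (measure_mono subset_closure)) hfin).ne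
  have : μ s < μ (closure s) := by
    rw [← h1, ← h2]
    exact ENNReal.add_lt_add_of_lt_of_le hfin2 hlt m2
  exact absurd heq.symm this.ne

lemma integrableOn_of_bounded' (μ : Measure G) {h : G → ℂ} (hc : Continuous h)
    {C : ℝ} (hC : ∀ x, ‖h x‖ ≤ C) {S : Set G} (hS : μ S < ∞) : IntegrableOn h S μ := by
  have : IsFiniteMeasure (μ.restrict S) := ⟨by rwa [Measure.restrict_apply_univ]⟩
  exact Integrable.mono' (integrable_const C) hc.aestronglyMeasurable.restrict
    (Filter.Eventually.of_forall hC)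


/-- the Eberlein convolution commutes with translation in the first argument. -/
theorem stmt4 (μ : Measure G) [μ.IsAddHaarMeasure] (A : ℕ → Set G)
    (hA : IsVanHove μ A) (f g : G → ℂ) (hf : IsCu f) (hg : IsCu g) (t : G)
    (F : G → ℂ) (h : EberleinTendsto μ A f g F) :
    EberleinTendsto μ A (shiftBy t f) g (shiftBy t F) := by
  obtain ⟨hAc, hApos, hAbd⟩ := hA
  obtain ⟨hfc, Cf, hCf⟩ := hf
  obtain ⟨hgc, Cg, hCg⟩ := hg
  intro u
  set v : G := u - t with hv
  set h' : G → ℂ := fun x => f x * g (v - x) with hh'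
  have hh'c : Continuous h' :=
    (hfc.continuous).mul (hgc.continuous.comp (continuous_const.sub continuous_id))
  have hCf0 : 0 ≤ Cf := le_trans (norm_nonneg _) (hCf 0)
  have hCg0 : 0 ≤ Cg := le_trans (norm_nonneg _) (hCg 0)
  set C : ℝ := Cf * Cg with hCdef
  have hC0 : 0 ≤ C := mul_nonneg hCf0 hCg0
  have hCb : ∀ x, ‖h' x‖ ≤ C := by
    intro x
    rw [hh']
    calc ‖f x * g (v - x)‖ = ‖f x‖ * ‖g (v - x)‖ := norm_mul _ _
    _ ≤ Cf * Cg := mul_le_mul (hCf x) (hCg _) (norm_nonneg _) hCf0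
  set A' : ℕ → Set G := fun n => closure (A n) with hA'
  set B' : ℕ → Set G := fun n => (fun x => x + t) ⁻¹' (A' n) with hB'
  have hA'm : ∀ n, MeasurableSet (A' n) := fun _ => isClosed_closure.measurableSet
  have hA'c : ∀ n, IsCompact (A' n) := fun n => (hAc n).closure
  have hB'm : ∀ n, MeasurableSet (B' n) := fun _ =>
    (isClosed_closure.preimage (continuous_add_right t)).measurableSet
  have hA'fin : ∀ n, μ (A' n) < ∞ := fun n => (hA'c n).measure_lt_top
  have hB'fin : ∀ n, μ (B' n) < ∞ := fun n => by
    have e : μ (B' n) = μ (A' n) := measure_preimage_add_right μ t (A' n)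
    rw [e]; exact hA'fin n
  have hres : ∀ n, μ.restrict (A n) = μ.restrict (A' n) :=
    fun n => (restrict_closure_of_isCompact μ (hAc n)).symm
  -- rewrite of the goal integrals
  have hfun : ∀ n, (∫ s in A n, shiftBy t f s * g (u - s) ∂μ) = ∫ s in B' n, h' s ∂μ := by
    intro n
    have e1 : (fun s => shiftBy t f s * g (u - s)) = fun s => h' (s - t) := by
      funext s
      simp only [shiftBy, hh']
      congr 2
      rw [hv]; abel
    rw [e1, hres n]
    have e3 : (fun x => x - t) ⁻¹' (B' n) = A' n := by
      ext x
      simp only [hB', Set.mem_preimage, sub_add_cancel]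
    rw [← e3]
    exact (measurePreserving_sub_right μ t).setIntegral_preimage_emb
      (MeasurableEquiv.subRight t).measurableEmbedding h' (B' n)
  -- rewrite of the hypothesis integrals
  have hbase : Tendsto (fun n => (μ (A n)).toReal⁻¹ • ∫ s in A' n, h' s ∂μ)
      atTop (nhds (F v)) := by
    have hbv := h v
    have e : (fun n => (μ (A n)).toReal⁻¹ • ∫ s in A n, f s * g (v - s) ∂μ)
        = fun n => (μ (A n)).toReal⁻¹ • ∫ s in A' n, h' s ∂μ := by
      funext n; rw [hres n]
    rwa [e] at hbv
  -- boundary estimates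
  set K : Set G := {t, -t} with hK
  have hKc : IsCompact K := (Set.toFinite K).isCompact
  have hbd := hAbd K hKc
  have hev : ∀ᶠ n in atTop, μ (vhBoundary K (A n)) / μ (A n) < 1 :=
    hbd.eventually_lt_const (by norm_num)
  have hsub1 : ∀ n, B' n \ A' n ⊆ vhBoundary K (A n) := by
    intro n x hx
    obtain ⟨hx1, hx2⟩ := hx
    left
    refine ⟨?_, fun hxA => hx2 (subset_closure hxA)⟩
    have h1 : x + t ∈ closure (A n) := hx1
    have h2 : x ∈ (fun y => y + -t) '' closure (A n) :=
      ⟨x + t, h1, show (x + t) + -t = x by abel⟩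
    have h3 : (fun y => y + -t) '' closure (A n) ⊆ closure ((fun y => y + -t) '' (A n)) :=
      image_closure_subset_closure_image (continuous_add_right (-t))
    have h4 : (fun y => y + -t) '' (A n) ⊆ A n + K := by
      rintro y ⟨a, ha, rfl⟩
      exact Set.add_mem_add ha (by simp [hK])
    exact closure_mono h4 (h3 h2)
  have hsub2 : ∀ n, A' n \ B' n ⊆ vhBoundary K (A n) := by
    intro n x hx
    obtain ⟨hx1, hx2⟩ := hx
    right
    refine ⟨?_, hx1⟩
    have h1 : x + t ∈ (A n)ᶜ := fun hmem => hx2 (subset_closure hmem)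
    have h2 : (x + t) - t ∈ (A n)ᶜ - K := Set.sub_mem_sub h1 (by simp [hK])
    have h3 : (x + t) - t = x := by abel
    rwa [h3] at h2
  -- the difference bound
  have key : ∀ᶠ n in atTop,
      ‖(μ (A n)).toReal⁻¹ • ∫ s in B' n, h' s ∂μ -
        (μ (A n)).toReal⁻¹ • ∫ s in A' n, h' s ∂μ‖ ≤
      (2 * C) * (μ (vhBoundary K (A n)) / μ (A n)).toReal := by
    filter_upwards [hev] with n hn
    have hDfin : μ (vhBoundary K (A n)) < ∞ := by
      by_contra hD
      push_neg at hD
      have hDtop : μ (vhBoundary K (A n)) = ∞ := top_le_iff.mp hD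
      have : μ (vhBoundary K (A n)) / μ (A n) = ∞ :=
        ENNReal.div_eq_top.mpr (Or.inr ⟨hDtop, (hAc n).measure_lt_top.ne⟩)
      rw [this] at hn
      exact absurd hn (by simp)
    have hint1 : IntegrableOn h' (B' n) μ := integrableOn_of_bounded' μ hh'c hCb (hB'fin n)
    have hint2 : IntegrableOn h' (A' n) μ := integrableOn_of_bounded' μ hh'c hCb (hA'fin n)
    have e1 : (∫ s in B' n, h' s ∂μ) =
        (∫ s in B' n ∩ A' n, h' s ∂μ) + ∫ s in B' n \ A' n, h' s ∂μ :=
      (integral_inter_add_diff (hA'm n) hint1).symm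
    have e2 : (∫ s in A' n, h' s ∂μ) =
        (∫ s in B' n ∩ A' n, h' s ∂μ) + ∫ s in A' n \ B' n, h' s ∂μ := by
      rw [Set.inter_comm]
      exact (integral_inter_add_diff (hB'm n) hint2).symm
    have hd : (∫ s in B' n, h' s ∂μ) - (∫ s in A' n, h' s ∂μ) =
        (∫ s in B' n \ A' n, h' s ∂μ) - ∫ s in A' n \ B' n, h' s ∂μ := by
      rw [e1, e2]; ring
    have hm1 : μ (B' n \ A' n) ≤ μ (vhBoundary K (A n)) := measure_mono (hsub1 n)
    have hm2 : μ (A' n \ B' n) ≤ μ (vhBoundary K (A n)) := measure_mono (hsub2 n)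
    have hb1 : ‖∫ s in B' n \ A' n, h' s ∂μ‖ ≤ C * (μ (B' n \ A' n)).toReal :=
      norm_setIntegral_le_of_norm_le_const_ae (lt_of_le_of_lt hm1 hDfin)
        (Filter.Eventually.of_forall hCb)
    have hb2 : ‖∫ s in A' n \ B' n, h' s ∂μ‖ ≤ C * (μ (A' n \ B' n)).toReal :=
      norm_setIntegral_le_of_norm_le_const_ae (lt_of_le_of_lt hm2 hDfin)
        (Filter.Eventually.of_forall hCb)
    have htr1 : (μ (B' n \ A' n)).toReal ≤ (μ (vhBoundary K (A n))).toReal :=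
      ENNReal.toReal_mono hDfin.ne hm1
    have htr2 : (μ (A' n \ B' n)).toReal ≤ (μ (vhBoundary K (A n))).toReal :=
      ENNReal.toReal_mono hDfin.ne hm2
    have hr0 : (0:ℝ) ≤ (μ (A n)).toReal⁻¹ := inv_nonneg.mpr ENNReal.toReal_nonneg
    rw [← smul_sub, norm_smul, hd]
    have hnorm : ‖(∫ s in B' n \ A' n, h' s ∂μ) - ∫ s in A' n \ B' n, h' s ∂μ‖ ≤
        2 * C * (μ (vhBoundary K (A n))).toReal := by
      calc ‖(∫ s in B' n \ A' n, h' s ∂μ) - ∫ s in A' n \ B' n, h' s ∂μ‖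
          ≤ ‖∫ s in B' n \ A' n, h' s ∂μ‖ + ‖∫ s in A' n \ B' n, h' s ∂μ‖ := norm_sub_le _ _
        _ ≤ C * (μ (vhBoundary K (A n))).toReal + C * (μ (vhBoundary K (A n))).toReal := by
            gcongr
            · exact hb1.trans (by gcongr)
            · exact hb2.trans (by gcongr)
        _ = 2 * C * (μ (vhBoundary K (A n))).toReal := by ring
    have : ‖(μ (A n)).toReal⁻¹‖ = (μ (A n)).toReal⁻¹ := Real.norm_of_nonneg hr0
    rw [this, ENNReal.toReal_div]
    calc (μ (A n)).toReal⁻¹ * ‖(∫ s in B' n \ A' n, h' s ∂μ) - ∫ s in A' n \ B' n, h' s ∂μ‖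
        ≤ (μ (A n)).toReal⁻¹ * (2 * C * (μ (vhBoundary K (A n))).toReal) := by gcongr
      _ = 2 * C * ((μ (vhBoundary K (A n))).toReal / (μ (A n)).toReal) := by ring
  -- limit of the bound
  have hDr : Tendsto (fun n => (2 * C) * (μ (vhBoundary K (A n)) / μ (A n)).toReal)
      atTop (nhds 0) := by
    have h1 : Tendsto (fun n => (μ (vhBoundary K (A n)) / μ (A n)).toReal) atTop (nhds 0) := by
      have h2 := (ENNReal.tendsto_toReal (a := 0) (by simp)).comp hbd
      simpa only [Function.comp_def, ENNReal.toReal_zero] using h2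
    simpa using h1.const_mul (2 * C)
  -- conclusion
  have hdiff : Tendsto (fun n => (μ (A n)).toReal⁻¹ • (∫ s in B' n, h' s ∂μ) -
      (μ (A n)).toReal⁻¹ • ∫ s in A' n, h' s ∂μ) atTop (nhds 0) := by
    rw [tendsto_zero_iff_norm_tendsto_zero]
    exact squeeze_zero' (Filter.Eventually.of_forall fun n => norm_nonneg _) key hDr
  have hgoal : Tendsto (fun n => (μ (A n)).toReal⁻¹ • ∫ s in B' n, h' s ∂μ)
      atTop (nhds (F v)) := by
    have := hdiff.add hbase
    simpa using this
  have efinal : (fun n => (μ (A n)).toReal⁻¹ • ∫ s in A n, shiftBy t f s * g (u - s) ∂μ)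
      = fun n => (μ (A n)).toReal⁻¹ • ∫ s in B' n, h' s ∂μ := by
    funext n; rw [hfun n]
  rw [show shiftBy t F u = F v from rfl, efinal]
  exact hgoal
end
end

section
/- Let f, g ∈ Cu(G), let χ be a character of G and let A = (A_n) be a van Hove sequence such that: (a) the Eberlein convolution f ⊛_A g exists; (b) the Fourier–Bohr coefficient c_χ^A(f) exists; (c) the Fourier–Bohr coefficient c_χ(g) exists uniformly with respect to A. Then the Fourier–Bohr coefficient c_χ(f ⊛_A g) exists uniformly with respect to A and c_χ(f ⊛_A g) = c_χ^A(f) · c_χ(g). -/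
open MeasureTheory Filter Topology Pointwise ComplexConjugate
open scoped BigOperators

noncomputable section

variable {G : Type*} [AddCommGroup G] [UniformSpace G] [IsUniformAddGroup G]
  [LocallyCompactSpace G] [SecondCountableTopology G]
  [MeasurableSpace G] [BorelSpace G]

set_option linter.unusedSectionVars false

section Helpers

variable {G : Type*} [AddCommGroup G] [UniformSpace G] [IsUniformAddGroup G]
  [LocallyCompactSpace G] [SecondCountableTopology G]
  [MeasurableSpace G] [BorelSpace G]

lemma integrable_of_cont_bdd (ν : MeasureTheory.Measure G) [IsFiniteMeasure ν]
    {h : G → ℂ} (hc : Continuous h) {C : ℝ} (hb : ∀ x, ‖h x‖ ≤ C) :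
    Integrable h ν :=
  (integrable_const C).mono' hc.aestronglyMeasurable (Filter.Eventually.of_forall hb)

lemma vadd_compact {S : Set G} (hS : IsCompact S) (x : G) : IsCompact (x +ᵥ S) := by
  rw [← Set.image_vadd]
  exact hS.image (continuous_const_vadd x)

lemma preimage_add_vadd (s x : G) (T : Set G) :
    (fun u : G => u + s) ⁻¹' (x +ᵥ T) = (x - s) +ᵥ T := by
  ext u
  simp only [Set.mem_preimage, Set.mem_vadd_set_iff_neg_vadd_mem, vadd_eq_add]
  have : -x + (u + s) = -(x - s) + u := by abel
  rw [this]

lemma setIntegral_translate (μ : MeasureTheory.Measure G) [μ.IsAddHaarMeasure]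
    (h : G → ℂ) (s x : G) (T : Set G) :
    ∫ t in x +ᵥ T, h (t - s) ∂μ = ∫ u in (x - s) +ᵥ T, h u ∂μ := by
  have hmp : MeasureTheory.MeasurePreserving (fun u : G => u + s) μ μ :=
    MeasureTheory.measurePreserving_add_right μ s
  have hemb : MeasurableEmbedding (fun u : G => u + s) :=
    (MeasurableEquiv.addRight s).measurableEmbedding
  have := hmp.setIntegral_preimage_emb hemb (fun t => h (t - s)) (x +ᵥ T)
  rw [preimage_add_vadd] at this
  simp only [add_sub_cancel_right] at this
  exact this.symm

end Helpers

/-- if `f ⊛_A g` exists, `c_χ^A(f)` exists and `c_χ(g)` exists uniformly,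
then `c_χ(f ⊛_A g)` exists uniformly and equals `c_χ^A(f) · c_χ(g)`. -/
theorem stmt5 (μ : Measure G) [μ.IsAddHaarMeasure] (A : ℕ → Set G)
    (hA : IsVanHove μ A) (f g χ : G → ℂ) (hf : IsCu f) (hg : IsCu g) (hχ : IsChar χ)
    (F : G → ℂ) (hF : EberleinTendsto μ A f g F)
    (a : ℂ) (ha : FBTendsto μ A χ f a)
    (b : ℂ) (hb : FBUniform μ A χ g b) :
    FBUniform μ A χ F (a * b) := by
  classical
  obtain ⟨hAc, hApos, -⟩ := hA
  obtain ⟨hfu, Cf, hCf⟩ := hf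
  obtain ⟨hgu, Cg, hCg⟩ := hg
  obtain ⟨hχc, hχn, hχm⟩ := hχ
  unfold FBUniform at hb ⊢
  unfold FBTendsto at ha
  unfold EberleinTendsto at hF
  have hCf0 : 0 ≤ Cf := le_trans (norm_nonneg _) (hCf 0)
  have hCg0 : 0 ≤ Cg := le_trans (norm_nonneg _) (hCg 0)
  set f' : G → ℂ := fun s => conj (χ s) * f s with hf'def
  set g' : G → ℂ := fun s => conj (χ s) * g s with hg'def
  have hχc' : Continuous fun s => (conj (χ s) : ℂ) := Complex.continuous_conj.comp hχc
  have hf'c : Continuous f' := hχc'.mul hfu.continuous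
  have hg'c : Continuous g' := hχc'.mul hgu.continuous
  have hf'b : ∀ s, ‖f' s‖ ≤ Cf := by
    intro s
    calc ‖f' s‖ = ‖conj (χ s)‖ * ‖f s‖ := norm_mul _ _
      _ = ‖f s‖ := by rw [RCLike.norm_conj, hχn s, one_mul]
      _ ≤ Cf := hCf s
  have hg'b : ∀ s, ‖g' s‖ ≤ Cg := by
    intro s
    calc ‖g' s‖ = ‖conj (χ s)‖ * ‖g s‖ := norm_mul _ _
      _ = ‖g s‖ := by rw [RCLike.norm_conj, hχn s, one_mul]
      _ ≤ Cg := hCg s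
  have hmulb : ∀ s t : G, ‖f' s * g' (t - s)‖ ≤ Cf * Cg := by
    intro s t
    calc ‖f' s * g' (t - s)‖ = ‖f' s‖ * ‖g' (t - s)‖ := norm_mul _ _
      _ ≤ Cf * Cg := mul_le_mul (hf'b s) (hg'b _) (norm_nonneg _) hCf0
  have hsplit : ∀ s t : G, conj (χ t) = conj (χ s) * conj (χ (t - s)) := by
    intro s t
    have h1 : s + (t - s) = t := by abel
    calc conj (χ t) = conj (χ (s + (t - s))) := by rw [h1]
      _ = conj (χ s * χ (t - s)) := by rw [hχm]
      _ = conj (χ s) * conj (χ (t - s)) := map_mul _ _ _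
  have hAfin : ∀ n, μ (A n) ≠ ⊤ := fun n => (hAc n).measure_lt_top.ne
  have hAr : ∀ n, 0 < (μ (A n)).toReal := fun n =>
    ENNReal.toReal_pos (hApos n).ne' (hAfin n)
  have finRes : ∀ (S : Set G), μ S ≠ ⊤ → IsFiniteMeasure (μ.restrict S) := fun S hS =>
    ⟨by rw [Measure.restrict_apply_univ]; exact lt_top_iff_ne_top.mpr hS⟩
  -- the averaged convolutions and their properties
  set ψ : ℕ → G → ℂ := fun m t => (μ (A m)).toReal⁻¹ • ∫ s in A m, f' s * g' (t - s) ∂μ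
    with hψdef
  have hψcont : ∀ m, Continuous (ψ m) := by
    intro m
    haveI := finRes (A m) (hAfin m)
    apply Continuous.const_smul (g := fun t => ∫ s in A m, f' s * g' (t - s) ∂μ) (c := (μ (A m)).toReal⁻¹)
    apply continuous_of_dominated (bound := fun _ => Cf * Cg)
    · intro t
      exact (hf'c.mul (hg'c.comp (continuous_const.sub continuous_id))).aestronglyMeasurable
    · intro t
      exact Filter.Eventually.of_forall fun s => hmulb s t
    · exact integrable_const _
    · exact Filter.Eventually.of_forall fun s =>
        continuous_const.mul (hg'c.comp (continuous_id.sub continuous_const))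
  have hψb : ∀ m t, ‖ψ m t‖ ≤ Cf * Cg := by
    intro m t
    rw [hψdef]
    simp only
    rw [norm_smul, Real.norm_eq_abs, abs_of_nonneg (inv_nonneg.mpr ENNReal.toReal_nonneg)]
    have h1 : ‖∫ s in A m, f' s * g' (t - s) ∂μ‖ ≤ (Cf * Cg) * (μ (A m)).toReal :=
      norm_setIntegral_le_of_norm_le_const ((hAc m).measure_lt_top)
        (fun s _ => hmulb s t)
    have h2 := mul_le_mul_of_nonneg_left h1 (inv_nonneg.mpr (ENNReal.toReal_nonneg
      (a := μ (A m))))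
    refine le_trans h2 (le_of_eq ?_)
    rw [mul_comm (Cf * Cg), ← mul_assoc, inv_mul_cancel₀ (hAr m).ne', one_mul]
  have hψlim : ∀ t, Tendsto (fun m => ψ m t) atTop (nhds (conj (χ t) * F t)) := by
    intro t
    have h0 := (hF t).const_mul (conj (χ t))
    refine h0.congr fun m => ?_
    rw [mul_smul_comm]
    congr 1
    rw [← MeasureTheory.integral_const_mul]
    refine integral_congr_ae (Filter.Eventually.of_forall fun s => ?_)
    rw [hsplit s t]
    ring
  -- the uniform convergence
  rw [Metric.tendstoUniformly_iff]
  intro ε hε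
  set ε' : ℝ := ε / (2 * (Cf + 1)) with hε'def
  have hden : (0:ℝ) < 2 * (Cf + 1) := by linarith
  have hε' : 0 < ε' := div_pos hε hden
  have hfinal : Cf * ε' < ε := by
    have h1 : Cf * ε' < (2 * (Cf + 1)) * ε' := by
      apply mul_lt_mul_of_pos_right _ hε'
      linarith
    have h2 : (2 * (Cf + 1)) * ε' = ε := by
      rw [hε'def, mul_div_cancel₀ _ hden.ne']
    linarith
  have hbU := Metric.tendstoUniformly_iff.mp hb ε' hε'
  filter_upwards [hbU] with n hn x
  rw [dist_eq_norm]
  have key : ‖(μ (A n)).toReal⁻¹ • (∫ t in x +ᵥ A n, conj (χ t) * F t ∂μ) - a * b‖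
      ≤ Cf * ε' := by
    set T : Set G := x +ᵥ A n with hT
    have hTfin : μ T ≠ ⊤ := (vadd_compact (hAc n) x).measure_lt_top.ne
    haveI := finRes T hTfin
    set rn : ℝ := (μ (A n)).toReal⁻¹ with hrn
    set I : G → ℂ := fun s => rn • ∫ t in T, g' (t - s) ∂μ with hIdef
    have hIb : ∀ s, ‖I s - b‖ ≤ ε' := by
      intro s
      have h1 : I s = rn • ∫ u in (x - s) +ᵥ A n, g' u ∂μ := by
        rw [hIdef]
        simp only
        rw [hT, setIntegral_translate μ g' s x (A n)]
      have h2 := hn (x - s)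
      rw [dist_eq_norm] at h2
      rw [h1]
      calc ‖rn • (∫ u in (x - s) +ᵥ A n, g' u ∂μ) - b‖
          = ‖b - rn • ∫ u in (x - s) +ᵥ A n, g' u ∂μ‖ := norm_sub_rev _ _
        _ ≤ ε' := le_of_lt h2
    have hIcont : Continuous I := by
      apply Continuous.const_smul (g := fun s => ∫ t in T, g' (t - s) ∂μ) (c := rn)
      apply continuous_of_dominated (bound := fun _ => Cg)
      · intro s
        exact (hg'c.comp (continuous_id.sub continuous_const)).aestronglyMeasurable
      · intro s
        exact Filter.Eventually.of_forall fun t => hg'b _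
      · exact integrable_const _
      · exact Filter.Eventually.of_forall fun t =>
          hg'c.comp (continuous_const.sub continuous_id)
    have hIbnd : ∀ s, ‖I s‖ ≤ Cg := by
      intro s
      rw [hIdef]
      simp only
      rw [norm_smul, Real.norm_eq_abs, hrn,
        abs_of_nonneg (inv_nonneg.mpr ENNReal.toReal_nonneg)]
      have h1 : ‖∫ t in T, g' (t - s) ∂μ‖ ≤ Cg * (μ T).toReal :=
        norm_setIntegral_le_of_norm_le_const (lt_top_iff_ne_top.mpr hTfin)
          (fun t _ => hg'b _)
      have hTA : μ T = μ (A n) := by rw [hT]; exact measure_vadd _ _ _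
      have h2 := mul_le_mul_of_nonneg_left h1 (inv_nonneg.mpr (ENNReal.toReal_nonneg
        (a := μ (A n))))
      refine le_trans h2 (le_of_eq ?_)
      rw [hTA, mul_comm Cg, ← mul_assoc, inv_mul_cancel₀ (hAr n).ne', one_mul]
    set Φ : ℕ → ℂ := fun m => (μ (A m)).toReal⁻¹ • ∫ s in A m, f' s * I s ∂μ with hΦdef
    set avg : ℕ → ℂ := fun m => (μ (A m)).toReal⁻¹ • ∫ s in A m, f' s ∂μ with havgdef
    have havg : Tendsto avg atTop (nhds a) := ha
    have hDCT : Tendsto (fun m => ∫ t in T, ψ m t ∂μ) atTop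
        (nhds (∫ t in T, conj (χ t) * F t ∂μ)) := by
      apply tendsto_integral_of_dominated_convergence (fun _ => Cf * Cg)
      · exact fun m => (hψcont m).aestronglyMeasurable
      · exact integrable_const _
      · exact fun m => Filter.Eventually.of_forall fun t => hψb m t
      · exact Filter.Eventually.of_forall fun t => hψlim t
    have hFub : ∀ m, rn • ∫ t in T, ψ m t ∂μ = Φ m := by
      intro m
      haveI := finRes (A m) (hAfin m)
      have hint : Integrable (Function.uncurry fun t s => f' s * g' (t - s))
          ((μ.restrict T).prod (μ.restrict (A m))) := by
        apply (integrable_const (Cf * Cg)).mono'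
        · exact ((hf'c.comp continuous_snd).mul
            (hg'c.comp (continuous_fst.sub continuous_snd))).aestronglyMeasurable
        · exact Filter.Eventually.of_forall fun p => hmulb p.2 p.1
      calc rn • ∫ t in T, ψ m t ∂μ
          = rn • ∫ t in T, (μ (A m)).toReal⁻¹ • ∫ s in A m, f' s * g' (t - s) ∂μ ∂μ := rfl
        _ = rn • ((μ (A m)).toReal⁻¹ • ∫ t in T, ∫ s in A m, f' s * g' (t - s) ∂μ ∂μ) := by
            rw [integral_smul]
        _ = (μ (A m)).toReal⁻¹ • (rn • ∫ t in T, ∫ s in A m, f' s * g' (t - s) ∂μ ∂μ) :=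
            smul_comm _ _ _
        _ = (μ (A m)).toReal⁻¹ • (rn • ∫ s in A m, ∫ t in T, f' s * g' (t - s) ∂μ ∂μ) := by
            rw [MeasureTheory.integral_integral_swap hint]
        _ = (μ (A m)).toReal⁻¹ • (rn • ∫ s in A m, f' s * ∫ t in T, g' (t - s) ∂μ ∂μ) := by
            congr 1
            congr 1
            refine integral_congr_ae (Filter.Eventually.of_forall fun s => ?_)
            exact MeasureTheory.integral_const_mul _ _
        _ = (μ (A m)).toReal⁻¹ • ∫ s in A m, rn • (f' s * ∫ t in T, g' (t - s) ∂μ) ∂μ := by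
            rw [integral_smul]
        _ = Φ m := by
            rw [hΦdef]
            simp only
            congr 1
            refine integral_congr_ae (Filter.Eventually.of_forall fun s => ?_)
            rw [hIdef]
            simp only
            rw [mul_smul_comm]
    have claim1 : Tendsto Φ atTop (nhds (rn • ∫ t in T, conj (χ t) * F t ∂μ)) := by
      have := hDCT.const_smul rn
      exact this.congr hFub
    have hconv : Tendsto (fun m => Φ m - avg m * b) atTop
        (nhds ((rn • ∫ t in T, conj (χ t) * F t ∂μ) - a * b)) :=
      claim1.sub (havg.mul_const b)
    have hbnd : ∀ m, ‖Φ m - avg m * b‖ ≤ Cf * ε' := by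
      intro m
      haveI := finRes (A m) (hAfin m)
      have hi1 : Integrable (fun s => f' s * I s) (μ.restrict (A m)) := by
        apply integrable_of_cont_bdd _ (hf'c.mul hIcont) (C := Cf * Cg)
        intro s
        calc ‖f' s * I s‖ = ‖f' s‖ * ‖I s‖ := norm_mul _ _
          _ ≤ Cf * Cg := mul_le_mul (hf'b s) (hIbnd s) (norm_nonneg _) hCf0
      have hi2 : Integrable f' (μ.restrict (A m)) := integrable_of_cont_bdd _ hf'c hf'b
      have h3 : ∫ s in A m, f' s * (I s - b) ∂μ
          = (∫ s in A m, f' s * I s ∂μ) - (∫ s in A m, f' s ∂μ) * b := by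
        calc ∫ s in A m, f' s * (I s - b) ∂μ
            = ∫ s in A m, (f' s * I s - f' s * b) ∂μ := by
              refine integral_congr_ae (Filter.Eventually.of_forall fun s => ?_)
              ring
          _ = (∫ s in A m, f' s * I s ∂μ) - ∫ s in A m, f' s * b ∂μ :=
              integral_sub hi1 (hi2.mul_const b)
          _ = _ := by rw [MeasureTheory.integral_mul_const]
      have heq : (μ (A m)).toReal⁻¹ • ∫ s in A m, f' s * (I s - b) ∂μ = Φ m - avg m * b := by
        rw [h3, smul_sub, ← smul_mul_assoc]
      rw [← heq, norm_smul, Real.norm_eq_abs,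
        abs_of_nonneg (inv_nonneg.mpr ENNReal.toReal_nonneg)]
      have hb1 : ‖∫ s in A m, f' s * (I s - b) ∂μ‖ ≤ (Cf * ε') * (μ (A m)).toReal :=
        norm_setIntegral_le_of_norm_le_const ((hAc m).measure_lt_top)
          (fun s _ => by
            calc ‖f' s * (I s - b)‖ = ‖f' s‖ * ‖I s - b‖ := norm_mul _ _
              _ ≤ Cf * ε' := mul_le_mul (hf'b s) (hIb s) (norm_nonneg _) hCf0)
      have h2 := mul_le_mul_of_nonneg_left hb1 (inv_nonneg.mpr (ENNReal.toReal_nonneg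
        (a := μ (A m))))
      refine le_trans h2 (le_of_eq ?_)
      rw [mul_comm (Cf * ε'), ← mul_assoc, inv_mul_cancel₀ (hAr m).ne', one_mul]
    exact le_of_tendsto hconv.norm (Filter.Eventually.of_forall hbnd)
  calc ‖a * b - (μ (A n)).toReal⁻¹ • ∫ t in x +ᵥ A n, conj (χ t) * F t ∂μ‖
      = ‖(μ (A n)).toReal⁻¹ • (∫ t in x +ᵥ A n, conj (χ t) * F t ∂μ) - a * b‖ :=
        norm_sub_rev _ _
    _ ≤ Cf * ε' := key
    _ < ε := hfinal
end
end

section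
/- Let f, g ∈ Cu(G), let χ be a character of G and let A be a van Hove sequence such that the Eberlein convolution f ⊛_A g exists and the Fourier–Bohr coefficient c_χ(g) exists uniformly with respect to A. Then c_χ(f ⊛_A g) exists uniformly with respect to A, and: (a) if c_χ(g) = 0 then c_χ(f ⊛_A g) = 0; (b) if c_χ(g) ≠ 0 then the Fourier–Bohr coefficient c_χ^A(f) exists and c_χ(f ⊛_A g) = c_χ^A(f) · c_χ(g). -/
open MeasureTheory Filter Topology Pointwise ComplexConjugate
open scoped BigOperators

noncomputable section

variable {G : Type*} [AddCommGroup G] [UniformSpace G] [IsUniformAddGroup G]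
  [LocallyCompactSpace G] [SecondCountableTopology G]
  [MeasurableSpace G] [BorelSpace G]

set_option linter.unusedSectionVars false in
lemma vadd_setIntegral (μ : Measure G) [μ.IsAddHaarMeasure] (x : G) (S : Set G) (h : G → ℂ) :
    ∫ t in x +ᵥ S, h t ∂μ = ∫ u in S, h (x + u) ∂μ := by
  have hmap : Measure.map (MeasurableEquiv.addLeft x) μ = μ := by
    simpa using map_add_left_eq_self μ x
  have hpre : (MeasurableEquiv.addLeft x) ⁻¹' (x +ᵥ S) = S := by
    ext u
    simp [Set.mem_vadd_set_iff_neg_vadd_mem, MeasurableEquiv.addLeft]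
  conv_lhs => rw [← hmap]
  rw [setIntegral_map_equiv, hpre]
  rfl

/-- Fourier–Bohr coefficients of `f ⊛_A g` when `c_χ(g)` exists uniformly. -/
theorem stmt6 (μ : Measure G) [μ.IsAddHaarMeasure] (A : ℕ → Set G)
    (hA : IsVanHove μ A) (f g χ : G → ℂ) (hf : IsCu f) (hg : IsCu g) (hχ : IsChar χ)
    (F : G → ℂ) (hF : EberleinTendsto μ A f g F)
    (b : ℂ) (hb : FBUniform μ A χ g b) :
    (∃ d : ℂ, FBUniform μ A χ F d) ∧
    (b = 0 → FBUniform μ A χ F 0) ∧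
    (b ≠ 0 → ∃ a : ℂ, FBTendsto μ A χ f a ∧ FBUniform μ A χ F (a * b)) := by
  classical
  obtain ⟨hAc, hApos, -⟩ := hA
  have hfc : Continuous f := hf.1.continuous
  have hgc : Continuous g := hg.1.continuous
  have hχc : Continuous χ := hχ.1
  obtain ⟨Cf0, hCf0⟩ := hf.2
  obtain ⟨Cg0, hCg0⟩ := hg.2
  set Cf : ℝ := max Cf0 0 with hCfdef
  set Cg : ℝ := max Cg0 0 with hCgdef
  have hCf : ∀ x, ‖f x‖ ≤ Cf := fun x => le_max_of_le_left (hCf0 x)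
  have hCg : ∀ x, ‖g x‖ ≤ Cg := fun x => le_max_of_le_left (hCg0 x)
  have hCf0' : 0 ≤ Cf := le_max_right _ _
  have hCg0' : 0 ≤ Cg := le_max_right _ _
  have hAfin : ∀ n, μ (A n) < ⊤ := fun n => (hAc n).measure_lt_top
  set a : ℕ → ℝ := fun n => (μ (A n)).toReal with hadef
  have ha : ∀ n, 0 < a n := fun n => ENNReal.toReal_pos (hApos n).ne' (hAfin n).ne
  have hfinR : ∀ (n : ℕ), IsFiniteMeasure (μ.restrict (A n)) := fun n =>
    ⟨by rw [Measure.restrict_apply_univ]; exact hAfin n⟩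
  have hvaddmeas : ∀ (x : G) (n : ℕ), μ (x +ᵥ A n) = μ (A n) := fun x n => measure_vadd μ x (A n)
  have hfinRv : ∀ (x : G) (n : ℕ), IsFiniteMeasure (μ.restrict (x +ᵥ A n)) := fun x n =>
    ⟨by rw [Measure.restrict_apply_univ, hvaddmeas]; exact hAfin n⟩
  -- abbreviations
  set Gm : ℕ → G → ℂ := fun m t => (a m)⁻¹ • ∫ s in A m, f s * g (t - s) ∂μ with hGmdef
  set B : ℕ → G → ℂ := fun n y => (a n)⁻¹ • ∫ t in y +ᵥ A n, conj (χ t) * g t ∂μ with hBdef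
  set c : ℕ → ℂ := fun m => (a m)⁻¹ • ∫ t in A m, conj (χ t) * f t ∂μ with hcdef
  set H : ℕ → G → ℂ := fun n x => (a n)⁻¹ • ∫ t in x +ᵥ A n, conj (χ t) * F t ∂μ with hHdef
  set E : ℕ → ℕ → G → ℂ := fun n m x => (a n)⁻¹ • ∫ t in x +ᵥ A n, conj (χ t) * Gm m t ∂μ
    with hEdef
  -- continuity helpers
  have hconjχ : Continuous fun t => conj (χ t) := continuous_star.comp hχc
  -- K1: key Fubini identity
  have hK1 : ∀ n m x, E n m x
      = (a m)⁻¹ • ∫ s in A m, (conj (χ s) * f s) * B n (x - s) ∂μ := by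
    intro n m x
    haveI := hfinR m
    haveI := hfinRv x n
    have hInt : Integrable
        (Function.uncurry fun t s => conj (χ t) * (f s * g (t - s)))
        ((μ.restrict (x +ᵥ A n)).prod (μ.restrict (A m))) := by
      constructor
      · apply Continuous.aestronglyMeasurable
        exact (hconjχ.comp continuous_fst).mul
          ((hfc.comp continuous_snd).mul (hgc.comp (continuous_fst.sub continuous_snd)))
      · apply HasFiniteIntegral.of_bounded (C := Cf * Cg)
        filter_upwards with p
        calc ‖conj (χ p.1) * (f p.2 * g (p.1 - p.2))‖
            = ‖χ p.1‖ * (‖f p.2‖ * ‖g (p.1 - p.2)‖) := by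
              rw [norm_mul, norm_mul, RCLike.norm_conj]
          _ ≤ 1 * (Cf * Cg) := by
              rw [hχ.2.1 p.1, one_mul, one_mul]
              exact mul_le_mul (hCf _) (hCg _) (norm_nonneg _) hCf0'
          _ = Cf * Cg := one_mul _
    have h1 : ∀ t, conj (χ t) * Gm m t
        = (a m)⁻¹ • ∫ s in A m, conj (χ t) * (f s * g (t - s)) ∂μ := by
      intro t
      show conj (χ t) * ((a m)⁻¹ • ∫ s in A m, f s * g (t - s) ∂μ) = _
      rw [mul_smul_comm]
      congr 1
      rw [integral_const_mul]
    have h2 : ∀ s, ∫ t in x +ᵥ A n, conj (χ t) * (f s * g (t - s)) ∂μ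
        = (conj (χ s) * f s) * ∫ v in (x - s) +ᵥ A n, conj (χ v) * g v ∂μ := by
      intro s
      rw [vadd_setIntegral μ x, vadd_setIntegral μ (x - s), ← integral_const_mul]
      refine integral_congr_ae (Filter.Eventually.of_forall fun u => ?_)
      dsimp only
      have e1 : x + u = s + (x - s + u) := by abel
      rw [e1, hχ.2.2 s (x - s + u), map_mul]
      have e2 : s + (x - s + u) - s = x - s + u := by abel
      rw [e2]
      ring
    calc E n m x
        = (a n)⁻¹ • ∫ t in x +ᵥ A n,
            ((a m)⁻¹ • ∫ s in A m, conj (χ t) * (f s * g (t - s)) ∂μ) ∂μ := by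
          show (a n)⁻¹ • ∫ t in x +ᵥ A n, conj (χ t) * Gm m t ∂μ = _
          simp_rw [h1]
      _ = (a n)⁻¹ • (a m)⁻¹ •
            ∫ t in x +ᵥ A n, ∫ s in A m, conj (χ t) * (f s * g (t - s)) ∂μ ∂μ := by
          rw [integral_smul]
      _ = (a n)⁻¹ • (a m)⁻¹ •
            ∫ s in A m, ∫ t in x +ᵥ A n, conj (χ t) * (f s * g (t - s)) ∂μ ∂μ := by
          rw [integral_integral_swap hInt]
      _ = (a n)⁻¹ • (a m)⁻¹ •
            ∫ s in A m, (conj (χ s) * f s)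
              * (∫ v in (x - s) +ᵥ A n, conj (χ v) * g v ∂μ) ∂μ := by
          simp_rw [h2]
      _ = (a m)⁻¹ • ∫ s in A m, (conj (χ s) * f s) * B n (x - s) ∂μ := by
          rw [smul_comm]
          congr 1
          rw [← integral_smul]
          refine integral_congr_ae (Filter.Eventually.of_forall fun s => ?_)
          dsimp only
          rw [← mul_smul_comm]
  -- strong measurability of B n
  have hBmeas : ∀ n, StronglyMeasurable (B n) := by
    intro n
    haveI := hfinR n
    have hcont : Continuous fun p : G × G => conj (χ (p.1 + p.2)) * g (p.1 + p.2) := by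
      have hadd : Continuous fun p : G × G => p.1 + p.2 := continuous_fst.add continuous_snd
      exact (hconjχ.comp hadd).mul (hgc.comp hadd)
    have hm : StronglyMeasurable fun y => ∫ u in A n, conj (χ (y + u)) * g (y + u) ∂μ :=
      hcont.stronglyMeasurable.integral_prod_right'
    have heq : B n = fun y => (a n)⁻¹ • ∫ u in A n, conj (χ (y + u)) * g (y + u) ∂μ := by
      funext y
      show (a n)⁻¹ • ∫ t in y +ᵥ A n, conj (χ t) * g t ∂μ = _
      rw [vadd_setIntegral]
    rw [heq]
    exact hm.const_smul ((a n)⁻¹ : ℝ)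
  have hmul3 : ∀ (s : G) (X Y : ℝ), 0 ≤ X → X ≤ Y → ‖χ s‖ * ‖f s‖ * X ≤ Cf * Y := by
    intro s X Y hX hXY
    rw [hχ.2.1 s, one_mul]
    exact mul_le_mul (hCf s) hXY hX hCf0'
  -- K2: uniform estimate
  have hK2 : ∀ ε : ℝ, 0 < ε → ∀ n m x, (∀ y, ‖B n y - b‖ ≤ ε) →
      ‖E n m x - c m * b‖ ≤ Cf * ε := by
    intro ε hε n m x hBy
    haveI := hfinR m
    have hcb : c m * b = (a m)⁻¹ • ∫ s in A m, (conj (χ s) * f s) * b ∂μ := by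
      show ((a m)⁻¹ • ∫ t in A m, conj (χ t) * f t ∂μ) * b = _
      rw [smul_mul_assoc, integral_mul_const]
    have h2i : Integrable (fun s => (conj (χ s) * f s) * b) (μ.restrict (A m)) := by
      constructor
      · exact ((hconjχ.mul hfc).mul continuous_const).aestronglyMeasurable
      · apply HasFiniteIntegral.of_bounded (C := Cf * ‖b‖)
        filter_upwards with s
        calc ‖conj (χ s) * f s * b‖ = ‖χ s‖ * ‖f s‖ * ‖b‖ := by
              rw [norm_mul, norm_mul, RCLike.norm_conj]
          _ ≤ Cf * ‖b‖ := hmul3 s _ _ (norm_nonneg _) le_rfl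
    have h1i : Integrable (fun s => (conj (χ s) * f s) * B n (x - s)) (μ.restrict (A m)) := by
      constructor
      · apply StronglyMeasurable.aestronglyMeasurable
        exact ((hconjχ.mul hfc).stronglyMeasurable).mul
          ((hBmeas n).comp_measurable (measurable_const.sub measurable_id))
      · apply HasFiniteIntegral.of_bounded (C := Cf * (‖b‖ + ε))
        filter_upwards with s
        have hBn : ‖B n (x - s)‖ ≤ ‖b‖ + ε := by
          calc ‖B n (x - s)‖ = ‖b + (B n (x - s) - b)‖ := by ring_nf
            _ ≤ ‖b‖ + ‖B n (x - s) - b‖ := norm_add_le _ _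
            _ ≤ ‖b‖ + ε := by gcongr; exact hBy _
        calc ‖conj (χ s) * f s * B n (x - s)‖ = ‖χ s‖ * ‖f s‖ * ‖B n (x - s)‖ := by
              rw [norm_mul, norm_mul, RCLike.norm_conj]
          _ ≤ Cf * (‖b‖ + ε) := hmul3 s _ _ (norm_nonneg _) hBn
    rw [hK1 n m x, hcb, ← smul_sub, ← integral_sub h1i h2i]
    have hptw : ∀ s : G, (conj (χ s) * f s) * B n (x - s) - (conj (χ s) * f s) * b
        = (conj (χ s) * f s) * (B n (x - s) - b) := fun s => (mul_sub _ _ _).symm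
    simp_rw [hptw]
    rw [norm_smul]
    have hnorm : ‖∫ s in A m, (conj (χ s) * f s) * (B n (x - s) - b) ∂μ‖
        ≤ (Cf * ε) * (μ.restrict (A m) Set.univ).toReal := by
      apply norm_integral_le_of_norm_le_const
      filter_upwards with s
      calc ‖conj (χ s) * f s * (B n (x - s) - b)‖
          = ‖χ s‖ * ‖f s‖ * ‖B n (x - s) - b‖ := by
            rw [norm_mul, norm_mul, RCLike.norm_conj]
        _ ≤ Cf * ε := hmul3 s _ _ (norm_nonneg _) (hBy _)
    rw [Measure.restrict_apply_univ] at hnorm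
    have hra : ((μ (A m)).toReal : ℝ) = a m := rfl
    calc ‖(a m)⁻¹‖ * ‖∫ s in A m, (conj (χ s) * f s) * (B n (x - s) - b) ∂μ‖
        ≤ (a m)⁻¹ * ((Cf * ε) * a m) := by
          rw [Real.norm_of_nonneg (inv_nonneg.2 (ha m).le)]
          exact mul_le_mul_of_nonneg_left (hra ▸ hnorm) (inv_nonneg.2 (ha m).le)
      _ = Cf * ε := by
          rw [mul_comm (Cf * ε) (a m), ← mul_assoc, inv_mul_cancel₀ (ha m).ne', one_mul]
  -- K3: dominated convergence in m
  have hK3 : ∀ (n : ℕ) (x : G), Tendsto (fun m => E n m x) atTop (nhds (H n x)) := by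
    intro n x
    haveI := hfinRv x n
    have hGmSM : ∀ m, StronglyMeasurable (Gm m) := by
      intro m
      haveI := hfinR m
      have hcont : Continuous fun p : G × G => f p.2 * g (p.1 - p.2) :=
        (hfc.comp continuous_snd).mul (hgc.comp (continuous_fst.sub continuous_snd))
      exact (hcont.stronglyMeasurable.integral_prod_right').const_smul ((a m)⁻¹ : ℝ)
    have hGmbd : ∀ m t, ‖Gm m t‖ ≤ Cf * Cg := by
      intro m t
      haveI := hfinR m
      have hn : ‖∫ s in A m, f s * g (t - s) ∂μ‖ ≤ (Cf * Cg) * (μ.restrict (A m) Set.univ).toReal := by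
        apply norm_integral_le_of_norm_le_const
        filter_upwards with s
        rw [norm_mul]
        exact mul_le_mul (hCf s) (hCg _) (norm_nonneg _) hCf0'
      rw [Measure.restrict_apply_univ] at hn
      show ‖(a m)⁻¹ • ∫ s in A m, f s * g (t - s) ∂μ‖ ≤ Cf * Cg
      rw [norm_smul, Real.norm_of_nonneg (inv_nonneg.2 (ha m).le)]
      calc (a m)⁻¹ * ‖∫ s in A m, f s * g (t - s) ∂μ‖
          ≤ (a m)⁻¹ * ((Cf * Cg) * a m) :=
            mul_le_mul_of_nonneg_left hn (inv_nonneg.2 (ha m).le)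
        _ = Cf * Cg := by
            rw [mul_comm (Cf * Cg) (a m), ← mul_assoc, inv_mul_cancel₀ (ha m).ne', one_mul]
    have hdct : Tendsto (fun m => ∫ t in x +ᵥ A n, conj (χ t) * Gm m t ∂μ) atTop
        (nhds (∫ t in x +ᵥ A n, conj (χ t) * F t ∂μ)) := by
      apply tendsto_integral_of_dominated_convergence (fun _ => Cf * Cg)
      · intro m
        exact (hconjχ.stronglyMeasurable.mul (hGmSM m)).aestronglyMeasurable
      · exact integrable_const _
      · intro m
        filter_upwards with t
        rw [norm_mul, RCLike.norm_conj, hχ.2.1 t, one_mul]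
        exact hGmbd m t
      · filter_upwards with t
        exact (hF t).const_mul (conj (χ t))
    exact hdct.const_smul _
  -- K4
  have hK4 : ∀ ε : ℝ, 0 < ε → ∃ N, ∀ n ≥ N, ∀ (m : ℕ) (x : G),
      ‖E n m x - c m * b‖ ≤ Cf * ε := by
    intro ε hε
    have hb' := hb
    rw [FBUniform, Metric.tendstoUniformly_iff] at hb'
    obtain ⟨N, hN⟩ := eventually_atTop.1 (hb' ε hε)
    refine ⟨N, fun n hn m x => hK2 ε hε n m x fun y => ?_⟩
    have h := hN n hn y
    rw [dist_comm, dist_eq_norm] at h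
    exact h.le
  -- Cauchy sequence c m * b
  have hcauchy : CauchySeq fun m => c m * b := by
    rw [Metric.cauchySeq_iff]
    intro ε hε
    have hden : (0:ℝ) < 2 * Cf + 3 := by linarith
    set ε' : ℝ := ε / (2 * Cf + 3) with hε'def
    have hε'pos : 0 < ε' := div_pos hε hden
    obtain ⟨N, hN⟩ := hK4 ε' hε'pos
    obtain ⟨M, hM⟩ := (Metric.tendsto_atTop.1 (hK3 N 0)) ε' hε'pos
    refine ⟨M, fun m hm m' hm' => ?_⟩
    have h1 : ‖E N m 0 - c m * b‖ ≤ Cf * ε' := hN N le_rfl m 0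
    have h2 : ‖E N m' 0 - c m' * b‖ ≤ Cf * ε' := hN N le_rfl m' 0
    have h3 : dist (E N m 0) (H N 0) < ε' := hM m hm
    have h4 : dist (E N m' 0) (H N 0) < ε' := hM m' hm'
    have e1 : dist (c m * b) (E N m 0) ≤ Cf * ε' := by
      rw [dist_comm, dist_eq_norm]; exact h1
    have e2 : dist (H N 0) (E N m' 0) ≤ ε' := by rw [dist_comm]; exact h4.le
    have e3 : dist (E N m' 0) (c m' * b) ≤ Cf * ε' := by rw [dist_eq_norm]; exact h2
    have e4 : dist (E N m 0) (H N 0) ≤ ε' := h3.le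
    have d1 := dist_triangle (c m * b) (E N m 0) (c m' * b)
    have d2 := dist_triangle (E N m 0) (H N 0) (c m' * b)
    have d3 := dist_triangle (H N 0) (E N m' 0) (c m' * b)
    calc dist (c m * b) (c m' * b)
        ≤ Cf * ε' + ε' + ε' + Cf * ε' := by linarith
      _ < ε := by
          have : Cf * ε' + ε' + ε' + Cf * ε' = (2 * Cf + 2) * ε' := by ring
          rw [this]
          have h5 : (2 * Cf + 2) * ε' < (2 * Cf + 3) * ε' := by
            apply mul_lt_mul_of_pos_right _ hε'pos
            linarith
          have h6 : (2 * Cf + 3) * ε' = ε := by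
            rw [hε'def, mul_div_cancel₀ _ hden.ne']
          linarith
  obtain ⟨L, hL⟩ := cauchySeq_tendsto_of_complete hcauchy
  -- K6
  have hK6 : ∀ ε : ℝ, 0 < ε → ∃ N, ∀ n ≥ N, ∀ x : G, ‖H n x - L‖ ≤ Cf * ε := by
    intro ε hε
    obtain ⟨N, hN⟩ := hK4 ε hε
    refine ⟨N, fun n hn x => ?_⟩
    have ht : Tendsto (fun m => E n m x - c m * b) atTop (nhds (H n x - L)) :=
      (hK3 n x).sub hL
    exact le_of_tendsto ht.norm (Eventually.of_forall fun m => hN n hn m x)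
  -- K7
  have hK7 : TendstoUniformly
      (fun n (x : G) => (μ (A n)).toReal⁻¹ • ∫ t in x +ᵥ A n, conj (χ t) * F t ∂μ)
      (fun _ => L) atTop := by
    rw [Metric.tendstoUniformly_iff]
    intro ε hε
    have hd : (0:ℝ) < Cf + 1 := by linarith
    have hε' : 0 < ε / (Cf + 1) := div_pos hε hd
    obtain ⟨N, hN⟩ := hK6 _ hε'
    rw [eventually_atTop]
    refine ⟨N, fun n hn x => ?_⟩
    have h := hN n hn x
    have hlt : Cf * (ε / (Cf + 1)) < ε := by
      have : Cf * (ε / (Cf + 1)) < (Cf + 1) * (ε / (Cf + 1)) := by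
        apply mul_lt_mul_of_pos_right _ hε'
        linarith
      rwa [mul_div_cancel₀ _ hd.ne'] at this
    have : dist L (H n x) = ‖H n x - L‖ := by rw [dist_comm, dist_eq_norm]
    rw [this]
    exact lt_of_le_of_lt h hlt
  refine ⟨⟨L, hK7⟩, ?_, ?_⟩
  · intro hb0
    have hzero : Tendsto (fun m => c m * b) atTop (nhds 0) := by
      simpa [hb0] using (tendsto_const_nhds : Tendsto (fun _ : ℕ => (0:ℂ)) atTop (nhds 0))
    have : L = 0 := tendsto_nhds_unique hL hzero
    exact this ▸ hK7
  · intro hb0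
    refine ⟨L * b⁻¹, ?_, ?_⟩
    · show Tendsto (fun m => c m) atTop (nhds (L * b⁻¹))
      have ht : Tendsto (fun m => c m * b * b⁻¹) atTop (nhds (L * b⁻¹)) := hL.mul_const _
      simpa [mul_assoc, mul_inv_cancel₀ hb0] using ht
    · have heq : L * b⁻¹ * b = L := by
        rw [mul_assoc, inv_mul_cancel₀ hb0, mul_one]
      show FBUniform μ A χ F (L * b⁻¹ * b)
      rw [heq]
      exact hK7
end
end

section
/- (Consistent phase property for functions.) Let f ∈ Cu(G), let χ be a character of G and let A be a van Hove sequence such that the Eberlein convolution f ⊛_A f̃ (the autocorrelation of f along A) exists and the Fourier–Bohr coefficient c_χ(f) exists uniformly with respect to A. Then the Fourier–Bohr coefficient c_χ(f ⊛_A f̃) exists uniformly with respect to A and c_χ(f ⊛_A f̃) = |c_χ(f)|². -/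
open MeasureTheory Filter Topology Pointwise ComplexConjugate
open scoped BigOperators

noncomputable section

variable {G : Type*} [AddCommGroup G] [UniformSpace G] [IsUniformAddGroup G]
  [LocallyCompactSpace G] [SecondCountableTopology G]
  [MeasurableSpace G] [BorelSpace G]

set_option linter.unusedSectionVars false

open scoped ENNReal

/-- aux: restrict of a translate is the pushforward of the restrict. -/
lemma aux_restrict_vadd (μ : Measure G) [μ.IsAddHaarMeasure] (x : G) (s : Set G) :
    μ.restrict (x +ᵥ s) = Measure.map (x + ·) (μ.restrict s) := by
  refine Measure.ext fun t ht => ?_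
  rw [Measure.restrict_apply ht,
    Measure.map_apply (measurable_const_add x) ht,
    Measure.restrict_apply (ht.preimage (measurable_const_add x))]
  have h1 : (x + ·) ⁻¹' t ∩ s = (-x) +ᵥ (t ∩ (x +ᵥ s)) := by
    ext y
    simp only [Set.mem_inter_iff, Set.mem_preimage, Set.mem_vadd_set_iff_neg_vadd_mem,
      vadd_eq_add, neg_neg]
    constructor
    · rintro ⟨h1, h2⟩; exact ⟨h1, by simpa using h2⟩
    · rintro ⟨h1, h2⟩; exact ⟨h1, by simpa using h2⟩
  rw [h1, measure_vadd]

lemma aux_setIntegral_vadd (μ : Measure G) [μ.IsAddHaarMeasure] (x : G) (s : Set G) (g : G → ℂ) :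
    ∫ t in x +ᵥ s, g t ∂μ = ∫ t in s, g (x + t) ∂μ := by
  rw [aux_restrict_vadd μ x s, (measurableEmbedding_addLeft x).integral_map]

lemma aux_finres (μ : Measure G) {s : Set G} (hs : μ s ≠ ∞) : IsFiniteMeasure (μ.restrict s) :=
  ⟨by rw [Measure.restrict_apply_univ]; exact hs.lt_top⟩

lemma aux_integrableOn (μ : Measure G) {h : G → ℂ} {s : Set G}
    (hm : AEStronglyMeasurable h (μ.restrict s)) {C : ℝ} (hC : ∀ x, ‖h x‖ ≤ C)
    (hs : μ s ≠ ∞) : IntegrableOn h s μ := by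
  haveI := aux_finres μ hs
  exact Integrable.mono' (integrable_const C) hm (Filter.Eventually.of_forall hC)

lemma aux_vh_subset₁ (v : G) (S : Set G) : (v +ᵥ S) \ S ⊆ vhBoundary {v, -v} S := by
  rintro y ⟨hy1, hy2⟩
  obtain ⟨s, hs, rfl⟩ := hy1
  refine Set.mem_union_left _ ⟨subset_closure ?_, hy2⟩
  have : (fun x => v +ᵥ x) s = s + v := by simp [vadd_eq_add, add_comm]
  rw [this]
  exact Set.add_mem_add hs (by simp)

lemma aux_vh_subset₂ (v : G) (S : Set G) : S \ (v +ᵥ S) ⊆ vhBoundary {v, -v} S := by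
  rintro y ⟨hy1, hy2⟩
  refine Set.mem_union_right _ ⟨?_, subset_closure hy1⟩
  have hnot : -v + y ∉ S := by
    intro hc
    exact hy2 ⟨-v + y, hc, by simp⟩
  refine ⟨y - v, ?_, -v, by simp, by show y - v - -v = y; rw [sub_neg_eq_add, sub_add_cancel]⟩
  simpa [sub_eq_add_neg, add_comm] using hnot

/-- consistent phase property for functions: if the autocorrelation
`f ⊛_A f̃` exists and `c_χ(f)` exists uniformly, then `c_χ(f ⊛_A f̃) = |c_χ(f)|²`,
the Fourier–Bohr coefficient existing uniformly. -/
theorem stmt9 (μ : Measure G) [μ.IsAddHaarMeasure] (A : ℕ → Set G)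
    (hA : IsVanHove μ A) (f χ : G → ℂ) (hf : IsCu f) (hχ : IsChar χ)
    (γ : G → ℂ) (hγ : EberleinTendsto μ A f (tilde f) γ)
    (a : ℂ) (ha : FBUniform μ A χ f a) :
    FBUniform μ A χ γ ((‖a‖ : ℂ) ^ 2) := by
  classical
  obtain ⟨hAc, hApos, hAvH⟩ := hA
  obtain ⟨hfu, C₀, hfC⟩ := hf
  obtain ⟨hχc, hχ1, hχm⟩ := hχ
  set h : G → ℂ := fun t => conj (χ t) * f t with hh
  have hhc : Continuous h := (continuous_star.comp hχc).mul hfu.continuous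
  set C : ℝ := max C₀ 1 with hCdef
  have hC1 : (1:ℝ) ≤ C := le_max_right _ _
  have hCpos : (0:ℝ) < C := lt_of_lt_of_le one_pos hC1
  have hhC : ∀ x, ‖h x‖ ≤ C := by
    intro x
    have h1 : ‖h x‖ = ‖f x‖ := by
      simp [hh, norm_mul, RCLike.norm_conj, hχ1 x]
    rw [h1]; exact (hfC x).trans (le_max_left _ _)
  have hAfin : ∀ n, μ (A n) ≠ ∞ := fun n => ((hAc n).measure_lt_top).ne
  set c : ℕ → ℝ := fun n => ((μ (A n)).toReal)⁻¹ with hcdef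
  have htR : ∀ n, 0 < (μ (A n)).toReal := fun n => ENNReal.toReal_pos (hApos n).ne' (hAfin n)
  have hcpos : ∀ n, 0 < c n := fun n => inv_pos.mpr (htR n)
  have hc1 : ∀ n, c n * (μ (A n)).toReal = 1 := fun n => inv_mul_cancel₀ (htR n).ne'
  set B : ℕ → Set G := fun n => toMeasurable μ (A n) with hBdef
  have hBm : ∀ n, MeasurableSet (B n) := fun n => measurableSet_toMeasurable μ (A n)
  have hres : ∀ n, μ.restrict (B n) = μ.restrict (A n) := fun n =>
    Measure.restrict_toMeasurable (hAfin n)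
  have hBμ : ∀ n, μ (B n) = μ (A n) := fun n => measure_toMeasurable (A n)
  have hBfin : ∀ n, μ (B n) ≠ ∞ := fun n => by rw [hBμ]; exact hAfin n
  have hresv : ∀ (x : G) (n : ℕ), μ.restrict (x +ᵥ A n) = μ.restrict (x +ᵥ B n) := by
    intro x n
    rw [aux_restrict_vadd μ x (A n), aux_restrict_vadd μ x (B n), hres]
  have hvBm : ∀ (x : G) (n : ℕ), MeasurableSet (x +ᵥ B n) := by
    intro x n
    have h1 : x +ᵥ B n = (fun y => -x + y) ⁻¹' (B n) := by
      ext y; simp [Set.mem_vadd_set_iff_neg_vadd_mem]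
    rw [h1]; exact (hBm n).preimage (measurable_const_add (-x))
  -- the averaged Fourier-Bohr sums
  set M : ℕ → G → ℂ := fun n y => c n • ∫ t in y +ᵥ A n, h t ∂μ with hMdef
  have haM : TendstoUniformly M (fun _ => a) atTop := ha
  have hMeq : ∀ n y, M n y = c n • ∫ s in A n, h (y + s) ∂μ := by
    intro n y
    simp only [hMdef]
    rw [aux_setIntegral_vadd]
  have hMbd : ∀ n y, ‖M n y‖ ≤ C := by
    intro n y
    have hb : ‖∫ t in y +ᵥ A n, h t ∂μ‖ ≤ C * (μ (y +ᵥ A n)).toReal := by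
      refine norm_setIntegral_le_of_norm_le_const ?_ (fun x _ => hhC x)
      rw [measure_vadd]; exact (hAfin n).lt_top
    calc ‖M n y‖ = c n * ‖∫ t in y +ᵥ A n, h t ∂μ‖ := by
          rw [hMdef]; simp [norm_smul, abs_of_pos (hcpos n)]
      _ ≤ c n * (C * (μ (y +ᵥ A n)).toReal) :=
          mul_le_mul_of_nonneg_left hb (hcpos n).le
      _ = C := by
          rw [measure_vadd]; simp only [hcdef]
          rw [mul_comm]; exact mul_inv_cancel_right₀ (htR n).ne' C
  have hMcont : ∀ n, Continuous (M n) := by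
    intro n
    have : Continuous fun y => ∫ s in A n, h (y + s) ∂μ := by
      haveI := aux_finres μ (hAfin n)
      refine continuous_of_dominated (bound := fun _ => C)
        (fun y => (hhc.comp (continuous_const.add continuous_id)).aestronglyMeasurable)
        (fun y => Filter.Eventually.of_forall fun s => hhC _)
        (integrable_const C)
        (Filter.Eventually.of_forall fun s =>
          hhc.comp (continuous_id.add continuous_const))
    have h2 : M n = fun y => c n • ∫ s in A n, h (y + s) ∂μ := funext fun y => hMeq n y
    rw [h2]
    exact this.const_smul (c n)
  -- unimodularity helper
  have hunit : ∀ z : ℂ, ‖z‖ = 1 → conj z * z = 1 := by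
    intro z hz
    rw [mul_comm, Complex.mul_conj]
    norm_cast
    rw [Complex.normSq_eq_norm_sq, hz, one_pow]
  set Γ : G → ℂ := fun t => conj (χ t) * γ t with hΓdef
  set g1 : ℕ → G → ℂ := fun m t => c m • ∫ s in A m, h s * conj (h (s - t)) ∂μ with hg1def
  set g2 : ℕ → G → ℂ := fun m t => c m • ∫ u in A m, h (t + u) * conj (h u) ∂μ with hg2def
  have hkey : ∀ t s : G, conj (χ t) * (f s * tilde f (t - s)) = h s * conj (h (s - t)) := by
    intro t s
    have h1 : χ s = χ t * χ (s - t) := by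
      rw [← hχm]; congr 1; abel
    have h2 : tilde f (t - s) = conj (f (s - t)) := by
      rw [tilde]; congr 2; abel
    have h3 : conj (χ (s - t)) * χ (s - t) = 1 := hunit _ (hχ1 _)
    have e1 : h s = conj (χ t) * conj (χ (s - t)) * f s := by
      simp only [hh]; rw [h1, map_mul]
    have e2 : conj (h (s - t)) = χ (s - t) * conj (f (s - t)) := by
      simp only [hh]; rw [map_mul, Complex.conj_conj]
    rw [e1, e2, h2]
    linear_combination (-(conj (χ t) * f s * conj (f (s - t)))) * h3
  have hΓlim : ∀ t, Tendsto (fun m => g1 m t) atTop (𝓝 (Γ t)) := by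
    intro t
    have h0 := (hγ t).const_mul (conj (χ t))
    refine h0.congr fun m => ?_
    rw [mul_smul_comm]
    congr 1
    rw [← integral_const_mul]
    exact integral_congr_ae (Filter.Eventually.of_forall fun s => hkey t s)
  -- Step A
  have hstepA : ∀ t, Tendsto (fun m => g1 m t - g2 m t) atTop (𝓝 0) := by
    intro t
    set K : Set G := {-t, t} with hKdef
    have hK : IsCompact K := (Set.toFinite K).isCompact
    set φ : G → ℂ := fun u => h (t + u) * conj (h u) with hφdef
    have hφc : Continuous φ :=
      (hhc.comp (continuous_const.add continuous_id)).mul (continuous_star.comp hhc)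
    have hφC : ∀ u, ‖φ u‖ ≤ C ^ 2 := by
      intro u
      rw [hφdef]
      calc ‖h (t + u) * conj (h u)‖ = ‖h (t + u)‖ * ‖h u‖ := by
            rw [norm_mul, RCLike.norm_conj]
        _ ≤ C * C := mul_le_mul (hhC _) (hhC _) (norm_nonneg _) hCpos.le
        _ = C ^ 2 := (sq C).symm
    have hg1eq : ∀ m, g1 m t = c m • ∫ u in (-t) +ᵥ A m, φ u ∂μ := by
      intro m
      simp only [hg1def]
      congr 1
      rw [aux_setIntegral_vadd]
      refine integral_congr_ae (Filter.Eventually.of_forall fun s => ?_)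
      simp only [hφdef]
      rw [add_neg_cancel_left, neg_add_eq_sub]
    have hbound : ∀ m, μ (vhBoundary K (A m)) ≠ ∞ →
        ‖g1 m t - g2 m t‖ ≤ 2 * C ^ 2 * ((μ (vhBoundary K (A m)) / μ (A m)).toReal) := by
      intro m hV
      set V := μ (vhBoundary K (A m)) with hVdef
      set Dt : Set G := (-t) +ᵥ B m with hDtdef
      have hDtm : MeasurableSet Dt := hvBm (-t) m
      have hDtμ : μ Dt = μ (A m) := by rw [hDtdef, measure_vadd, hBμ]
      have hXfin : μ (Dt ∩ B m) ≠ ∞ :=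
        fun hc => hBfin m (top_le_iff.mp (hc ▸ measure_mono Set.inter_subset_right))
      -- μ (Dt \ B m) ≤ V
      have hsub1 : μ (Dt \ B m) ≤ V := by
        have e1 : μ (Dt \ B m) + μ (Dt ∩ B m) = μ Dt := measure_diff_add_inter Dt (hBm m)
        have e3 : μ ((-t) +ᵥ A m) = μ (A m) := measure_vadd μ (-t) (A m)
        have e4 : μ (A m) ≤ μ (((-t) +ᵥ A m) \ A m) + μ (((-t) +ᵥ A m) ∩ A m) := by
          rw [← e3]
          conv_lhs => rw [← Set.diff_union_inter ((-t) +ᵥ A m) (A m)]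
          exact measure_union_le _ _
        have e5 : μ (((-t) +ᵥ A m) \ A m) ≤ V := by
          refine measure_mono ?_
          have := aux_vh_subset₁ (-t) (A m)
          rwa [show ({-t, -(-t)} : Set G) = K by rw [neg_neg]] at this
        have e6 : μ (((-t) +ᵥ A m) ∩ A m) ≤ μ (Dt ∩ B m) :=
          measure_mono (Set.inter_subset_inter
            (Set.vadd_set_mono (subset_toMeasurable μ (A m)))
            (subset_toMeasurable μ (A m)))
        have : μ (Dt \ B m) + μ (Dt ∩ B m) ≤ V + μ (Dt ∩ B m) := by
          rw [e1, hDtμ]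
          exact e4.trans (add_le_add e5 e6)
        exact (ENNReal.add_le_add_iff_right hXfin).mp this
      have hsub2 : μ (B m \ Dt) ≤ V := by
        have e1 : μ (B m \ Dt) + μ (B m ∩ Dt) = μ (B m) := measure_diff_add_inter (B m) hDtm
        have e4 : μ (A m) ≤ μ (A m \ ((-t) +ᵥ A m)) + μ (A m ∩ ((-t) +ᵥ A m)) := by
          conv_lhs => rw [← Set.diff_union_inter (A m) ((-t) +ᵥ A m)]
          exact measure_union_le _ _
        have e5 : μ (A m \ ((-t) +ᵥ A m)) ≤ V := by
          refine measure_mono ?_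
          have := aux_vh_subset₂ (-t) (A m)
          rwa [show ({-t, -(-t)} : Set G) = K by rw [neg_neg]] at this
        have e6 : μ (A m ∩ ((-t) +ᵥ A m)) ≤ μ (B m ∩ Dt) :=
          measure_mono (Set.inter_subset_inter (subset_toMeasurable μ (A m))
            (Set.vadd_set_mono (subset_toMeasurable μ (A m))))
        have hXfin2 : μ (B m ∩ Dt) ≠ ∞ :=
          fun hc => hBfin m (top_le_iff.mp (hc ▸ measure_mono Set.inter_subset_left))
        have : μ (B m \ Dt) + μ (B m ∩ Dt) ≤ V + μ (B m ∩ Dt) := by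
          rw [e1, hBμ]
          exact e4.trans (add_le_add e5 e6)
        exact (ENNReal.add_le_add_iff_right hXfin2).mp this
      -- integrability
      have hIDt : IntegrableOn φ Dt μ :=
        aux_integrableOn μ hφc.aestronglyMeasurable.restrict hφC (by rw [hDtμ]; exact hAfin m)
      have hIB : IntegrableOn φ (B m) μ :=
        aux_integrableOn μ hφc.aestronglyMeasurable.restrict hφC (hBfin m)
      -- difference of integrals
      have hdiff : (∫ u in Dt, φ u ∂μ) - ∫ u in B m, φ u ∂μ =
          (∫ u in Dt \ B m, φ u ∂μ) - ∫ u in B m \ Dt, φ u ∂μ := by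
        have q1 : (∫ u in Dt ∩ B m, φ u ∂μ) + ∫ u in Dt \ B m, φ u ∂μ = ∫ u in Dt, φ u ∂μ :=
          integral_inter_add_diff (hBm m) hIDt
        have q2 : (∫ u in B m ∩ Dt, φ u ∂μ) + ∫ u in B m \ Dt, φ u ∂μ = ∫ u in B m, φ u ∂μ :=
          integral_inter_add_diff hDtm hIB
        rw [← q1, ← q2, Set.inter_comm]
        ring
      have hg12 : g1 m t - g2 m t = c m • ((∫ u in Dt, φ u ∂μ) - ∫ u in B m, φ u ∂μ) := by
        rw [hg1eq m]
        simp only [hg2def]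
        rw [← smul_sub, hresv (-t) m, ← hres m, hDtdef]
      have hn1 : ‖∫ u in Dt \ B m, φ u ∂μ‖ ≤ C ^ 2 * (μ (Dt \ B m)).toReal :=
        norm_setIntegral_le_of_norm_le_const
          (lt_of_le_of_lt (measure_mono Set.diff_subset) (hDtμ ▸ (hAfin m).lt_top))
          (fun u _ => hφC u)
      have hn2 : ‖∫ u in B m \ Dt, φ u ∂μ‖ ≤ C ^ 2 * (μ (B m \ Dt)).toReal :=
        norm_setIntegral_le_of_norm_le_const
          (lt_of_le_of_lt (measure_mono Set.diff_subset) ((hBfin m).lt_top))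
          (fun u _ => hφC u)
      have ht1 : (μ (Dt \ B m)).toReal ≤ V.toReal := ENNReal.toReal_mono hV hsub1
      have ht2 : (μ (B m \ Dt)).toReal ≤ V.toReal := ENNReal.toReal_mono hV hsub2
      calc ‖g1 m t - g2 m t‖
          = c m * ‖(∫ u in Dt, φ u ∂μ) - ∫ u in B m, φ u ∂μ‖ := by
            rw [hg12, norm_smul, Real.norm_eq_abs, abs_of_pos (hcpos m)]
        _ = c m * ‖(∫ u in Dt \ B m, φ u ∂μ) - ∫ u in B m \ Dt, φ u ∂μ‖ := by rw [hdiff]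
        _ ≤ c m * (C ^ 2 * (μ (Dt \ B m)).toReal + C ^ 2 * (μ (B m \ Dt)).toReal) := by
            refine mul_le_mul_of_nonneg_left ?_ (hcpos m).le
            exact (norm_sub_le _ _).trans (add_le_add hn1 hn2)
        _ ≤ c m * (C ^ 2 * V.toReal + C ^ 2 * V.toReal) := by
            refine mul_le_mul_of_nonneg_left ?_ (hcpos m).le
            have hC2 : (0:ℝ) ≤ C ^ 2 := sq_nonneg C
            exact add_le_add (mul_le_mul_of_nonneg_left ht1 hC2)
              (mul_le_mul_of_nonneg_left ht2 hC2)
        _ = 2 * C ^ 2 * ((V / μ (A m)).toReal) := by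
            rw [ENNReal.toReal_div]
            simp only [hcdef]
            rw [div_eq_mul_inv]
            ring
    have hev : ∀ᶠ m in atTop, μ (vhBoundary K (A m)) ≠ ∞ := by
      have h1 := (hAvH K hK).eventually_lt_const (by norm_num : (0:ℝ≥0∞) < 1)
      filter_upwards [h1] with m hm
      intro hc
      rw [hc, ENNReal.top_div_of_ne_top (hAfin m)] at hm
      simp at hm
    have hz : Tendsto (fun m => 2 * C ^ 2 * ((μ (vhBoundary K (A m)) / μ (A m)).toReal))
        atTop (𝓝 0) := by
      have h2 : Tendsto (fun m => ((μ (vhBoundary K (A m)) / μ (A m)).toReal)) atTop (𝓝 0) := by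
        have h3 := (ENNReal.tendsto_toReal (by simp : (0:ℝ≥0∞) ≠ ⊤)).comp (hAvH K hK)
        simpa [Function.comp_def] using h3
      simpa using h2.const_mul (2 * C ^ 2)
    refine squeeze_zero_norm' ?_ hz
    filter_upwards [hev] with m hm
    exact hbound m hm
  -- Step B: g2 converges pointwise to Γ
  have hg2lim : ∀ t, Tendsto (fun m => g2 m t) atTop (𝓝 (Γ t)) := by
    intro t
    have h0 := (hΓlim t).sub (hstepA t)
    simp only [sub_sub_cancel, sub_zero] at h0
    exact h0
  have hg2bd : ∀ m t, ‖g2 m t‖ ≤ C ^ 2 := by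
    intro m t
    have hb : ‖∫ u in A m, h (t + u) * conj (h u) ∂μ‖ ≤ C ^ 2 * (μ (A m)).toReal := by
      refine norm_setIntegral_le_of_norm_le_const ((hAfin m).lt_top) (fun u _ => ?_)
      calc ‖h (t + u) * conj (h u)‖ = ‖h (t + u)‖ * ‖h u‖ := by
            rw [norm_mul, RCLike.norm_conj]
        _ ≤ C * C := mul_le_mul (hhC _) (hhC _) (norm_nonneg _) hCpos.le
        _ = C ^ 2 := (sq C).symm
    calc ‖g2 m t‖ = c m * ‖∫ u in A m, h (t + u) * conj (h u) ∂μ‖ := by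
          simp only [hg2def]
          rw [norm_smul, Real.norm_eq_abs, abs_of_pos (hcpos m)]
      _ ≤ c m * (C ^ 2 * (μ (A m)).toReal) := mul_le_mul_of_nonneg_left hb (hcpos m).le
      _ = C ^ 2 := by
          simp only [hcdef]
          rw [mul_comm]
          exact mul_inv_cancel_right₀ (htR m).ne' _
  have hg2cont : ∀ m, Continuous (g2 m) := by
    intro m
    have hcont : Continuous fun t => ∫ u in A m, h (t + u) * conj (h u) ∂μ := by
      haveI := aux_finres μ (hAfin m)
      refine continuous_of_dominated (bound := fun _ => C ^ 2)
        (fun t => ((hhc.comp (continuous_const.add continuous_id)).mul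
          (continuous_star.comp hhc)).aestronglyMeasurable)
        (fun t => Filter.Eventually.of_forall fun u => ?_)
        (integrable_const _)
        (Filter.Eventually.of_forall fun u =>
          ((hhc.comp (continuous_id.add continuous_const)).mul continuous_const))
      calc ‖h (t + u) * conj (h u)‖ = ‖h (t + u)‖ * ‖h u‖ := by
            rw [norm_mul, RCLike.norm_conj]
        _ ≤ C * C := mul_le_mul (hhC _) (hhC _) (norm_nonneg _) hCpos.le
        _ = C ^ 2 := (sq C).symm
    have h2 : g2 m = fun t => c m • ∫ u in A m, h (t + u) * conj (h u) ∂μ := rfl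
    rw [h2]
    exact hcont.const_smul (c m)
  -- Step C: dominated convergence over the translates
  have hstepC : ∀ (n : ℕ) (x : G), Tendsto (fun m => c n • ∫ t in x +ᵥ A n, g2 m t ∂μ)
      atTop (𝓝 (c n • ∫ t in x +ᵥ A n, Γ t ∂μ)) := by
    intro n x
    refine Tendsto.const_smul ?_ (c n)
    haveI := aux_finres μ (show μ (x +ᵥ A n) ≠ ∞ by rw [measure_vadd]; exact hAfin n)
    exact tendsto_integral_of_dominated_convergence (fun _ => C ^ 2)
      (fun m => (hg2cont m).aestronglyMeasurable.restrict)
      (integrable_const _)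
      (fun m => Filter.Eventually.of_forall fun t => hg2bd m t)
      (Filter.Eventually.of_forall fun t => hg2lim t)
  -- Step D: Fubini
  have hstepD : ∀ (n m : ℕ) (x : G), c n • ∫ t in x +ᵥ A n, g2 m t ∂μ =
      c m • ∫ u in A m, M n (u + x) * conj (h u) ∂μ := by
    intro n m x
    haveI i1 := aux_finres μ (show μ (x +ᵥ A n) ≠ ∞ by rw [measure_vadd]; exact hAfin n)
    haveI i2 := aux_finres μ (hAfin m)
    have hF : Integrable (Function.uncurry fun t u => h (t + u) * conj (h u))
        ((μ.restrict (x +ᵥ A n)).prod (μ.restrict (A m))) := by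
      have hcont : Continuous (Function.uncurry fun t u => h (t + u) * conj (h u)) :=
        (hhc.comp (continuous_fst.add continuous_snd)).mul
          ((continuous_star.comp hhc).comp continuous_snd)
      refine Integrable.mono' (integrable_const (C ^ 2)) hcont.aestronglyMeasurable
        (Filter.Eventually.of_forall fun p => ?_)
      obtain ⟨t', u'⟩ := p
      calc ‖Function.uncurry (fun t u => h (t + u) * conj (h u)) (t', u')‖
          = ‖h (t' + u')‖ * ‖h u'‖ := by
            rw [Function.uncurry_apply_pair, norm_mul, RCLike.norm_conj]
        _ ≤ C * C := mul_le_mul (hhC _) (hhC _) (norm_nonneg _) hCpos.le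
        _ = C ^ 2 := (sq C).symm
    calc c n • ∫ t in x +ᵥ A n, g2 m t ∂μ
        = c n • ∫ t in x +ᵥ A n, c m • ∫ u in A m, h (t + u) * conj (h u) ∂μ ∂μ := rfl
      _ = c m • (c n • ∫ t in x +ᵥ A n, ∫ u in A m, h (t + u) * conj (h u) ∂μ ∂μ) := by
          rw [integral_smul, smul_comm]
      _ = c m • (c n • ∫ u in A m, ∫ t in x +ᵥ A n, h (t + u) * conj (h u) ∂μ ∂μ) := by
          rw [integral_integral_swap hF]
      _ = c m • ∫ u in A m, c n • ∫ t in x +ᵥ A n, h (t + u) * conj (h u) ∂μ ∂μ := by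
          rw [integral_smul]
      _ = c m • ∫ u in A m, M n (u + x) * conj (h u) ∂μ := by
          refine congrArg _ (integral_congr_ae (Filter.Eventually.of_forall fun u => ?_))
          show c n • ∫ t in x +ᵥ A n, h (t + u) * conj (h u) ∂μ = M n (u + x) * conj (h u)
          rw [integral_mul_const, ← smul_mul_assoc]
          congr 1
          rw [hMeq n (u + x), aux_setIntegral_vadd]
          congr 1
          refine integral_congr_ae (Filter.Eventually.of_forall fun s => ?_)
          congr 1
          abel
  -- limits of a * conj (M m 0)
  have hMm0 : Tendsto (fun m => M m 0) atTop (𝓝 a) :=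
    (tendstoUniformly_iff_tendstoUniformlyOnFilter.mp haM).tendsto_at le_top
  have haconj : a * conj a = (‖a‖ : ℂ) ^ 2 := by
    rw [Complex.mul_conj]
    norm_cast
    rw [Complex.normSq_eq_norm_sq]
  have hlimA : Tendsto (fun m => a * conj (M m 0)) atTop (𝓝 ((‖a‖ : ℂ) ^ 2)) := by
    rw [← haconj]
    exact ((continuous_star.tendsto a).comp hMm0).const_mul a
  have hacm : ∀ m, a * conj (M m 0) = c m • ∫ u in A m, a * conj (h u) ∂μ := by
    intro m
    have h0 : M m 0 = c m • ∫ u in A m, h u ∂μ := by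
      rw [hMeq]
      congr 1
      exact integral_congr_ae (Filter.Eventually.of_forall fun s => by simp)
    have h1 : conj (M m 0) = c m • ∫ u in A m, conj (h u) ∂μ := by
      rw [h0, Complex.real_smul, map_mul, Complex.conj_ofReal, integral_conj, Complex.real_smul]
    rw [h1, mul_smul_comm, ← integral_const_mul]
  -- the key uniform estimate
  have hDbd : ∀ ε' : ℝ, 0 < ε' → ∀ n : ℕ, (∀ y, ‖M n y - a‖ ≤ ε') → ∀ (m : ℕ) (x : G),
      ‖(c m • ∫ u in A m, M n (u + x) * conj (h u) ∂μ) - a * conj (M m 0)‖ ≤ ε' * C := by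
    intro ε' hε' n hn m x
    have hint1 : IntegrableOn (fun u => M n (u + x) * conj (h u)) (A m) μ := by
      refine aux_integrableOn μ (((hMcont n).comp (continuous_id.add continuous_const)).mul
        (continuous_star.comp hhc)).aestronglyMeasurable.restrict (C := C * C)
        (fun u => ?_) (hAfin m)
      calc ‖M n (u + x) * conj (h u)‖ = ‖M n (u + x)‖ * ‖h u‖ := by
            rw [norm_mul, RCLike.norm_conj]
        _ ≤ C * C := mul_le_mul (hMbd _ _) (hhC _) (norm_nonneg _) hCpos.le
    have hint2 : IntegrableOn (fun u => a * conj (h u)) (A m) μ := by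
      refine aux_integrableOn μ ((continuous_const.mul
        (continuous_star.comp hhc)).aestronglyMeasurable.restrict) (C := ‖a‖ * C)
        (fun u => ?_) (hAfin m)
      calc ‖a * conj (h u)‖ = ‖a‖ * ‖h u‖ := by rw [norm_mul, RCLike.norm_conj]
        _ ≤ ‖a‖ * C := mul_le_mul_of_nonneg_left (hhC _) (norm_nonneg _)
    rw [hacm m, ← smul_sub, ← integral_sub hint1 hint2]
    have hb : ‖∫ u in A m, (M n (u + x) * conj (h u) - a * conj (h u)) ∂μ‖ ≤
        (ε' * C) * (μ (A m)).toReal := by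
      refine norm_setIntegral_le_of_norm_le_const ((hAfin m).lt_top) (fun u _ => ?_)
      calc ‖M n (u + x) * conj (h u) - a * conj (h u)‖
          = ‖M n (u + x) - a‖ * ‖h u‖ := by rw [← sub_mul, norm_mul, RCLike.norm_conj]
        _ ≤ ε' * C := mul_le_mul (hn _) (hhC _) (norm_nonneg _) hε'.le
    calc ‖c m • ∫ u in A m, (M n (u + x) * conj (h u) - a * conj (h u)) ∂μ‖
        = c m * ‖∫ u in A m, (M n (u + x) * conj (h u) - a * conj (h u)) ∂μ‖ := by
          rw [norm_smul, Real.norm_eq_abs, abs_of_pos (hcpos m)]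
      _ ≤ c m * ((ε' * C) * (μ (A m)).toReal) := mul_le_mul_of_nonneg_left hb (hcpos m).le
      _ = ε' * C := by
          simp only [hcdef]
          rw [mul_comm]
          exact mul_inv_cancel_right₀ (htR m).ne' _
  -- final assembly
  refine Metric.tendstoUniformly_iff.mpr fun ε hε => ?_
  set ε' : ℝ := ε / (2 * C) with hε'def
  have hε' : 0 < ε' := div_pos hε (by positivity)
  have hev := Metric.tendstoUniformly_iff.mp haM ε' hε'
  filter_upwards [hev] with n hn x
  have hn' : ∀ y, ‖M n y - a‖ ≤ ε' := fun y => by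
    have := hn y
    rw [dist_comm, dist_eq_norm] at this
    exact this.le
  have hT1 : Tendsto (fun m => c m • ∫ u in A m, M n (u + x) * conj (h u) ∂μ)
      atTop (𝓝 (c n • ∫ t in x +ᵥ A n, Γ t ∂μ)) :=
    (hstepC n x).congr fun m => hstepD n m x
  have hT2 := hT1.sub hlimA
  have hfin : ‖(c n • ∫ t in x +ᵥ A n, Γ t ∂μ) - (‖a‖ : ℂ) ^ 2‖ ≤ ε' * C :=
    le_of_tendsto hT2.norm (Filter.Eventually.of_forall fun m => hDbd ε' hε' n hn' m x)
  have hdist : dist ((‖a‖ : ℂ) ^ 2) (c n • ∫ t in x +ᵥ A n, Γ t ∂μ) < ε := by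
    rw [dist_eq_norm, norm_sub_rev]
    calc ‖(c n • ∫ t in x +ᵥ A n, Γ t ∂μ) - (‖a‖ : ℂ) ^ 2‖ ≤ ε' * C := hfin
      _ = ε / 2 := by rw [hε'def]; field_simp
      _ < ε := by linarith
  exact hdist
end
end

section
/- Let f ∈ Cu(G), let A be a van Hove sequence, let χ_1, …, χ_k be characters of G and c_1, …, c_k ∈ ℂ, and set P := c_1 χ_1 + … + c_k χ_k. If for each 1 ≤ j ≤ k the Fourier–Bohr coefficient c_{χ_j}^A(f) exists and c_{χ_j}^A(f) = 0, then the Eberlein convolutions f ⊛_A P̃ and P ⊛_A f̃ exist and f ⊛_A P̃ = P ⊛_A f̃ = 0. -/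
open MeasureTheory Filter Topology Pointwise ComplexConjugate
open scoped BigOperators

noncomputable section

variable {G : Type*} [AddCommGroup G] [UniformSpace G] [IsUniformAddGroup G]
  [LocallyCompactSpace G] [SecondCountableTopology G]
  [MeasurableSpace G] [BorelSpace G]

section Aux

set_option linter.unusedSectionVars false

open scoped ENNReal

variable {μ : Measure G}

private lemma intOn {g : G → ℂ} (hg : Continuous g) {C : ℝ} (hC : ∀ x, ‖g x‖ ≤ C)
    {S : Set G} (hS : μ S < ⊤) : IntegrableOn g S μ :=
  Integrable.mono' (integrableOn_const hS.ne)
    hg.aestronglyMeasurable.restrict (Filter.Eventually.of_forall hC)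

private lemma measure_preimage_add_right' [μ.IsAddHaarMeasure] (t : G) (S : Set G) :
    μ ((· + t) ⁻¹' S) = μ S := by
  have := (MeasurableEquiv.addRight t).map_apply (μ := μ) S
  rw [show ⇑(MeasurableEquiv.addRight t) = (· + t) from rfl, map_add_right_eq_self] at this
  exact this.symm

private lemma setIntegral_shift [μ.IsAddHaarMeasure] {g : G → ℂ} (hg : Continuous g)
    (t : G) (S : Set G) :
    ∫ s in S, g (s - t) ∂μ = ∫ s in (· + t) ⁻¹' S, g s ∂μ := by
  have hmap : ((μ.restrict ((· + t) ⁻¹' S)).map (· + t)) = μ.restrict S := by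
    ext s hs
    rw [Measure.map_apply (measurable_add_const t) hs,
      Measure.restrict_apply (hs.preimage (measurable_add_const t)),
      Measure.restrict_apply hs, ← Set.preimage_inter]
    exact measure_preimage_add_right' t _
  calc ∫ s in S, g (s - t) ∂μ
      = ∫ s, g (s - t) ∂((μ.restrict ((· + t) ⁻¹' S)).map (· + t)) := by rw [hmap]
    _ = ∫ s, g (s + t - t) ∂(μ.restrict ((· + t) ⁻¹' S)) := by
        have hmeas : AEStronglyMeasurable (fun s : G => g (s - t))
            ((μ.restrict ((· + t) ⁻¹' S)).map (· + t)) :=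
          (hg.comp (continuous_sub_right t)).aestronglyMeasurable
        rw [integral_map (measurable_add_const t).aemeasurable hmeas]
    _ = ∫ s in (· + t) ⁻¹' S, g s ∂μ := by simp [add_sub_cancel_right]

private lemma shift_limit [μ.IsAddHaarMeasure] {A : ℕ → Set G} (hA : IsVanHove μ A)
    {g : G → ℂ} (hg : Continuous g) {C : ℝ} (hC : ∀ x, ‖g x‖ ≤ C) (t : G)
    (h0 : Tendsto (fun n => (μ (A n)).toReal⁻¹ • ∫ s in A n, g s ∂μ) atTop (nhds 0)) :
    Tendsto (fun n => (μ (A n)).toReal⁻¹ • ∫ s in A n, g (s - t) ∂μ) atTop (nhds 0) := by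
  obtain ⟨hcomp, hpos, hbd⟩ := hA
  have hC0 : (0:ℝ) ≤ C := (norm_nonneg _).trans (hC 0)
  set K : Set G := {t, -t} with hKdef
  have hKc : IsCompact K := (Set.toFinite K).isCompact
  have hfin : ∀ n, μ (A n) ≠ ⊤ := fun n => (hcomp n).measure_lt_top.ne
  set S : ℕ → Set G := fun n => (· + t) ⁻¹' (A n) with hSdef
  have hμS : ∀ n, μ (S n) = μ (A n) := fun n => measure_preimage_add_right' t (A n)
  set B : ℕ → Set G := fun n => toMeasurable μ (A n) with hBdef
  set S' : ℕ → Set G := fun n => toMeasurable μ (S n) with hS'def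
  have hBm : ∀ n, MeasurableSet (B n) := fun n => measurableSet_toMeasurable μ (A n)
  have hS'm : ∀ n, MeasurableSet (S' n) := fun n => measurableSet_toMeasurable μ (S n)
  have hBr : ∀ n, μ.restrict (B n) = μ.restrict (A n) := fun n =>
    Measure.restrict_toMeasurable (hfin n)
  have hSr : ∀ n, μ.restrict (S' n) = μ.restrict (S n) := fun n =>
    Measure.restrict_toMeasurable (by rw [hμS n]; exact hfin n)
  -- boundary estimates
  have hd1 : ∀ n, μ (S' n \ B n) ≤ μ (vhBoundary K (A n)) := by
    intro n
    have h1 : μ (S' n \ B n) = μ (S n \ B n) := by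
      rw [Set.diff_eq, Set.inter_comm, ← Measure.restrict_apply (hBm n).compl,
        hSr n, Measure.restrict_apply (hBm n).compl, Set.inter_comm, ← Set.diff_eq]
    rw [h1]
    refine measure_mono fun x hx => ?_
    have hxA : x ∉ A n := fun hxa => hx.2 (subset_toMeasurable μ (A n) hxa)
    have hxm : (x + t) + (-t) ∈ A n + K :=
      Set.add_mem_add hx.1 (by simp [hKdef])
    rw [add_neg_cancel_right] at hxm
    exact Or.inl ⟨subset_closure hxm, hxA⟩
  have hd2 : ∀ n, μ (B n \ S' n) ≤ μ (vhBoundary K (A n)) := by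
    intro n
    have h1 : μ (B n \ S' n) = μ (A n \ S' n) := by
      rw [Set.diff_eq, Set.inter_comm, ← Measure.restrict_apply (hS'm n).compl,
        hBr n, Measure.restrict_apply (hS'm n).compl, Set.inter_comm, ← Set.diff_eq]
    rw [h1]
    refine le_trans (measure_mono (Set.diff_subset_diff_right (subset_toMeasurable μ (S n)))) ?_
    refine measure_mono fun x hx => ?_
    have hxm : (x + t) - t ∈ (A n)ᶜ - K :=
      Set.sub_mem_sub (hx.2 : x + t ∉ A n) (by simp [hKdef])
    rw [add_sub_cancel_right] at hxm
    exact Or.inr ⟨hxm, subset_closure hx.1⟩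
  have hbfin : ∀ n, μ (vhBoundary K (A n)) ≠ ⊤ := by
    intro n
    have hle : μ (vhBoundary K (A n)) ≤ μ (closure (A n + K)) + μ (closure (A n)) :=
      le_trans (measure_union_le _ _)
        (add_le_add (measure_mono Set.diff_subset) (measure_mono Set.inter_subset_right))
    refine (hle.trans_lt (ENNReal.add_lt_top.2 ⟨?_, ?_⟩)).ne
    · rw [((hcomp n).add hKc).measure_closure]; exact ((hcomp n).add hKc).measure_lt_top
    · rw [(hcomp n).measure_closure]; exact (hcomp n).measure_lt_top
  -- decompose the integral
  have hiS : ∀ n, IntegrableOn g (S' n) μ := fun n =>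
    intOn hg hC (by rw [measure_toMeasurable, hμS n]; exact (hcomp n).measure_lt_top)
  have hiB : ∀ n, IntegrableOn g (B n) μ := fun n =>
    intOn hg hC (by rw [measure_toMeasurable]; exact (hcomp n).measure_lt_top)
  have hcalc : ∀ n, ∫ s in A n, g (s - t) ∂μ
      = (∫ s in B n, g s ∂μ) + ((∫ s in S' n, g s ∂μ) - ∫ s in B n, g s ∂μ) := by
    intro n
    have e1 : ∫ s in A n, g (s - t) ∂μ = ∫ s in S' n, g s ∂μ := by
      rw [setIntegral_shift hg t (A n)]
      show ∫ s, g s ∂(μ.restrict (S n)) = ∫ s, g s ∂(μ.restrict (S' n))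
      rw [hSr n]
    rw [e1]; ring
  have hErr : ∀ n, ‖(∫ s in S' n, g s ∂μ) - ∫ s in B n, g s ∂μ‖
      ≤ 2 * C * (μ (vhBoundary K (A n))).toReal := by
    intro n
    have hfin1 : μ (S' n \ B n) < ⊤ := (hd1 n).trans_lt (lt_top_iff_ne_top.2 (hbfin n))
    have hfin2 : μ (B n \ S' n) < ⊤ := (hd2 n).trans_lt (lt_top_iff_ne_top.2 (hbfin n))
    have d1 : ∫ s in S' n, g s ∂μ
        = (∫ s in S' n ∩ B n, g s ∂μ) + ∫ s in S' n \ B n, g s ∂μ :=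
      (integral_inter_add_diff (hBm n) (hiS n)).symm
    have d2 : ∫ s in B n, g s ∂μ
        = (∫ s in B n ∩ S' n, g s ∂μ) + ∫ s in B n \ S' n, g s ∂μ :=
      (integral_inter_add_diff (hS'm n) (hiB n)).symm
    rw [d1, d2, Set.inter_comm (B n) (S' n), add_sub_add_left_eq_sub]
    have n1 : ‖∫ s in S' n \ B n, g s ∂μ‖ ≤ C * (μ (S' n \ B n)).toReal :=
      norm_setIntegral_le_of_norm_le_const_ae hfin1 (Filter.Eventually.of_forall hC)
    have n2 : ‖∫ s in B n \ S' n, g s ∂μ‖ ≤ C * (μ (B n \ S' n)).toReal :=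
      norm_setIntegral_le_of_norm_le_const_ae hfin2 (Filter.Eventually.of_forall hC)
    have m1 : (μ (S' n \ B n)).toReal ≤ (μ (vhBoundary K (A n))).toReal :=
      ENNReal.toReal_mono (hbfin n) (hd1 n)
    have m2 : (μ (B n \ S' n)).toReal ≤ (μ (vhBoundary K (A n))).toReal :=
      ENNReal.toReal_mono (hbfin n) (hd2 n)
    calc ‖(∫ s in S' n \ B n, g s ∂μ) - ∫ s in B n \ S' n, g s ∂μ‖
        ≤ ‖∫ s in S' n \ B n, g s ∂μ‖ + ‖∫ s in B n \ S' n, g s ∂μ‖ := norm_sub_le _ _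
      _ ≤ C * (μ (vhBoundary K (A n))).toReal + C * (μ (vhBoundary K (A n))).toReal := by
          have := mul_le_mul_of_nonneg_left m1 hC0
          have := mul_le_mul_of_nonneg_left m2 hC0
          linarith
      _ = 2 * C * (μ (vhBoundary K (A n))).toReal := by ring
  have hq : Tendsto (fun n => (μ (vhBoundary K (A n)) / μ (A n)).toReal) atTop (nhds 0) := by
    have h' := (ENNReal.tendsto_toReal (a := 0) (by simp)).comp (hbd K hKc)
    simpa [Function.comp_def] using h'
  have hE : Tendsto (fun n => (μ (A n)).toReal⁻¹ •
      ((∫ s in S' n, g s ∂μ) - ∫ s in B n, g s ∂μ)) atTop (nhds 0) := by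
    have hgb : ∀ n, ‖(μ (A n)).toReal⁻¹ •
        ((∫ s in S' n, g s ∂μ) - ∫ s in B n, g s ∂μ)‖
        ≤ 2 * C * (μ (vhBoundary K (A n)) / μ (A n)).toReal := by
      intro n
      rw [norm_smul, Real.norm_eq_abs,
        abs_of_nonneg (inv_nonneg.2 ENNReal.toReal_nonneg)]
      have := mul_le_mul_of_nonneg_left (hErr n)
        (inv_nonneg.2 (ENNReal.toReal_nonneg (a := μ (A n))))
      rw [ENNReal.toReal_div]
      calc (μ (A n)).toReal⁻¹ * ‖(∫ s in S' n, g s ∂μ) - ∫ s in B n, g s ∂μ‖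
          ≤ (μ (A n)).toReal⁻¹ * (2 * C * (μ (vhBoundary K (A n))).toReal) := this
        _ = 2 * C * ((μ (vhBoundary K (A n))).toReal / (μ (A n)).toReal) := by
            rw [div_eq_mul_inv]; ring
    exact squeeze_zero_norm hgb (by simpa using hq.const_mul (2 * C))
  have hMain : Tendsto (fun n => (μ (A n)).toReal⁻¹ • ∫ s in B n, g s ∂μ) atTop (nhds 0) := by
    refine h0.congr fun n => ?_
    show (μ (A n)).toReal⁻¹ • ∫ s, g s ∂(μ.restrict (A n))
      = (μ (A n)).toReal⁻¹ • ∫ s, g s ∂(μ.restrict (B n))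
    rw [hBr n]
  have := hMain.add hE
  rw [add_zero] at this
  refine this.congr fun n => ?_
  rw [← smul_add, ← hcalc n]

end Aux

/-- if all Fourier–Bohr coefficients of `f` at the characters occurring in
the trigonometric polynomial `P = ∑ c_j χ_j` exist and vanish, then `f ⊛_A P̃` and
`P ⊛_A f̃` exist and vanish. -/
theorem stmt12 (μ : Measure G) [μ.IsAddHaarMeasure] (A : ℕ → Set G)
    (hA : IsVanHove μ A) (f : G → ℂ) (hf : IsCu f)
    (k : ℕ) (c : Fin k → ℂ) (χ : Fin k → G → ℂ) (hχ : ∀ j, IsChar (χ j))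
    (h : ∀ j, FBTendsto μ A (χ j) f 0) :
    EberleinTendsto μ A f (tilde (fun x => ∑ j, c j * χ j x)) (fun _ => 0) ∧
    EberleinTendsto μ A (fun x => ∑ j, c j * χ j x) (tilde f) (fun _ => 0) := by
  obtain ⟨hfu, Cf, hCf⟩ := hf
  have hfc : Continuous f := hfu.continuous
  have hcomp := hA.1
  constructor
  · intro t
    have key : ∀ n, (μ (A n)).toReal⁻¹ •
          ∫ s in A n, f s * tilde (fun x => ∑ j, c j * χ j x) (t - s) ∂μ
        = ∑ j, (conj (c j) * conj (χ j (-t))) *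
            ((μ (A n)).toReal⁻¹ • ∫ s in A n, conj (χ j s) * f s ∂μ) := by
      intro n
      have hpt : ∀ s : G, f s * tilde (fun x => ∑ j, c j * χ j x) (t - s)
          = ∑ j, (conj (c j) * conj (χ j (-t))) * (conj (χ j s) * f s) := by
        intro s
        show f s * conj (∑ j, c j * χ j (-(t - s))) = _
        rw [neg_sub, map_sum, Finset.mul_sum]
        refine Finset.sum_congr rfl fun j _ => ?_
        have hs := (hχ j).2.2 s (-t)
        rw [show s + -t = s - t from (sub_eq_add_neg s t).symm] at hs
        rw [map_mul, hs, map_mul]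
        ring
      have e1 : ∫ s in A n, f s * tilde (fun x => ∑ j, c j * χ j x) (t - s) ∂μ
          = ∫ s in A n, (∑ j, (conj (c j) * conj (χ j (-t))) * (conj (χ j s) * f s)) ∂μ :=
        integral_congr_ae (Filter.Eventually.of_forall hpt)
      have hint : ∀ j ∈ Finset.univ, IntegrableOn
          (fun s => (conj (c j) * conj (χ j (-t))) * (conj (χ j s) * f s)) (A n) μ := by
        intro j _
        have hcont : Continuous fun s : G =>
            (conj (c j) * conj (χ j (-t))) * (conj (χ j s) * f s) :=
          continuous_const.mul ((Complex.continuous_conj.comp (hχ j).1).mul hfc)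
        refine intOn hcont (C := ‖conj (c j) * conj (χ j (-t))‖ * Cf) (fun x => ?_)
          (hcomp n).measure_lt_top
        rw [norm_mul]
        refine mul_le_mul_of_nonneg_left ?_ (norm_nonneg _)
        rw [norm_mul, RCLike.norm_conj, (hχ j).2.1, one_mul]
        exact hCf x
      rw [e1, integral_finset_sum Finset.univ hint, Finset.smul_sum]
      refine Finset.sum_congr rfl fun j _ => ?_
      rw [integral_const_mul, Complex.real_smul, Complex.real_smul]
      ring
    have lim := tendsto_finset_sum (Finset.univ : Finset (Fin k))
      (fun j _ => (h j).const_mul (conj (c j) * conj (χ j (-t))))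
    simp only [mul_zero, Finset.sum_const_zero] at lim
    exact lim.congr fun n => (key n).symm
  · intro t
    have hgc : ∀ j, Continuous (fun u => χ j u * conj (f u)) := fun j =>
      (hχ j).1.mul (Complex.continuous_conj.comp hfc)
    have hgb : ∀ j x, ‖χ j x * conj (f x)‖ ≤ Cf := by
      intro j x
      rw [norm_mul, (hχ j).2.1, one_mul, RCLike.norm_conj]
      exact hCf x
    have key : ∀ n, (μ (A n)).toReal⁻¹ •
          ∫ s in A n, (∑ j, c j * χ j s) * tilde f (t - s) ∂μ
        = ∑ j, (c j * χ j t) *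
            ((μ (A n)).toReal⁻¹ • ∫ s in A n, χ j (s - t) * conj (f (s - t)) ∂μ) := by
      intro n
      have hpt : ∀ s : G, (∑ j, c j * χ j s) * tilde f (t - s)
          = ∑ j, (c j * χ j t) * (χ j (s - t) * conj (f (s - t))) := by
        intro s
        show (∑ j, c j * χ j s) * conj (f (-(t - s))) = _
        rw [neg_sub, Finset.sum_mul]
        refine Finset.sum_congr rfl fun j _ => ?_
        have hs := (hχ j).2.2 t (s - t)
        rw [show t + (s - t) = s by abel] at hs
        rw [hs]
        ring
      have e1 : ∫ s in A n, (∑ j, c j * χ j s) * tilde f (t - s) ∂μ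
          = ∫ s in A n, (∑ j, (c j * χ j t) * (χ j (s - t) * conj (f (s - t)))) ∂μ :=
        integral_congr_ae (Filter.Eventually.of_forall hpt)
      have hint : ∀ j ∈ Finset.univ, IntegrableOn
          (fun s => (c j * χ j t) * (χ j (s - t) * conj (f (s - t)))) (A n) μ := by
        intro j _
        have hcont : Continuous fun s : G =>
            (c j * χ j t) * (χ j (s - t) * conj (f (s - t))) :=
          continuous_const.mul ((hgc j).comp (continuous_sub_right t))
        refine intOn hcont (C := ‖c j * χ j t‖ * Cf) (fun x => ?_) (hcomp n).measure_lt_top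
        rw [norm_mul]
        exact mul_le_mul_of_nonneg_left (hgb j _) (norm_nonneg _)
      rw [e1, integral_finset_sum Finset.univ hint, Finset.smul_sum]
      refine Finset.sum_congr rfl fun j _ => ?_
      rw [integral_const_mul, Complex.real_smul, Complex.real_smul]
      ring
    have hper : ∀ j : Fin k, Tendsto
        (fun n => (μ (A n)).toReal⁻¹ • ∫ s in A n, χ j (s - t) * conj (f (s - t)) ∂μ)
        atTop (nhds 0) := by
      intro j
      refine shift_limit hA (hgc j) (hgb j) t ?_
      have hcstar : ∀ n, (μ (A n)).toReal⁻¹ • ∫ s in A n, χ j s * conj (f s) ∂μ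
          = conj ((μ (A n)).toReal⁻¹ • ∫ s in A n, conj (χ j s) * f s ∂μ) := by
        intro n
        rw [Complex.real_smul, Complex.real_smul, map_mul, Complex.conj_ofReal, ← integral_conj]
        congr 1
        refine integral_congr_ae (Filter.Eventually.of_forall fun s => ?_)
        simp
      have h2 : Tendsto (fun n =>
          conj ((μ (A n)).toReal⁻¹ • ∫ s in A n, conj (χ j s) * f s ∂μ)) atTop (nhds 0) := by
        have := (h j).star
        simpa [RCLike.star_def] using this
      exact h2.congr fun n => (hcstar n).symm
    have lim := tendsto_finset_sum (Finset.univ : Finset (Fin k))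
      (fun j _ => (hper j).const_mul (c j * χ j t))
    simp only [mul_zero, Finset.sum_const_zero] at lim
    exact lim.congr fun n => (key n).symm
end
end

section
/- Let f, g ∈ Cu(G) and let A be a van Hove sequence. Assume that for each ε > 0 there exists h ∈ Cu(G) such that: (a) ‖g − h‖_{b,2,A} < ε, and (b) the Eberlein convolution f ⊛_A h̃ exists and ‖f ⊛_A h̃‖_∞ < ε. Then the Eberlein convolution f ⊛_A g̃ exists and f ⊛_A g̃ = 0. -/
open MeasureTheory Filter Topology Pointwise ComplexConjugate
open scoped BigOperators

noncomputable section

variable {G : Type*} [AddCommGroup G] [UniformSpace G] [IsUniformAddGroup G]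
  [LocallyCompactSpace G] [SecondCountableTopology G]
  [MeasurableSpace G] [BorelSpace G]

private lemma stmt13_intOn {G : Type*} [AddCommGroup G] [UniformSpace G] [IsUniformAddGroup G]
    [LocallyCompactSpace G] [SecondCountableTopology G]
    [MeasurableSpace G] [BorelSpace G]
    {E : Type*} [NormedAddCommGroup E]
    {μ : Measure G} {s : Set G} (hs : μ s ≠ ⊤) {F : G → E}
    (hFc : Continuous F) {C : ℝ} (hC : ∀ x, ‖F x‖ ≤ C) : IntegrableOn F s μ := by
  have : IsFiniteMeasure (μ.restrict s) :=
    ⟨by rw [Measure.restrict_apply_univ]; exact hs.lt_top⟩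
  exact (integrable_const C).mono' hFc.aestronglyMeasurable (Filter.Eventually.of_forall hC)

set_option maxHeartbeats 1600000

/-- auxiliary approximation lemma: if `g` can be `b,2,A`-approximated by
functions `h ∈ Cu(G)` for which `f ⊛_A h̃` exists with small sup norm, then `f ⊛_A g̃`
exists and vanishes. -/
theorem stmt13 (μ : Measure G) [μ.IsAddHaarMeasure] (A : ℕ → Set G)
    (hA : IsVanHove μ A) (f g : G → ℂ) (hf : IsCu f) (hg : IsCu g)
    (happrox : ∀ ε : ℝ, 0 < ε → ∃ h : G → ℂ, IsCu h ∧
      bNorm μ A 2 (fun x => g x - h x) < ε ∧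
      ∃ H : G → ℂ, EberleinTendsto μ A f (tilde h) H ∧ supN H < ε) :
    EberleinTendsto μ A f (tilde g) (fun _ => 0) := by
  obtain ⟨hAc, hApos, hAvh⟩ := hA
  have hmfin : ∀ n, μ (A n) ≠ ⊤ := fun n => (hAc n).measure_lt_top.ne
  have hm : ∀ n, 0 < (μ (A n)).toReal := fun n => ENNReal.toReal_pos (hApos n).ne' (hmfin n)
  have hmn1 : ∀ n, (μ (A n)).toReal⁻¹ * (μ (A n)).toReal = 1 := fun n => inv_mul_cancel₀ (hm n).ne'
  have ha0 : ∀ n, (0:ℝ) ≤ (μ (A n)).toReal⁻¹ := fun n => inv_nonneg.2 (hm n).le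
  obtain ⟨hfu, Cf', hCf'⟩ := hf
  set Cf : ℝ := max Cf' 0 with hCfdef
  have hCf : ∀ x, ‖f x‖ ≤ Cf := fun x => (hCf' x).trans (le_max_left _ _)
  have hCf0 : (0:ℝ) ≤ Cf := le_max_right _ _
  have hfc : Continuous f := hfu.continuous
  obtain ⟨hgu, Cg', hCg'⟩ := hg
  set Cg : ℝ := max Cg' 0 with hCgdef
  have hCg : ∀ x, ‖g x‖ ≤ Cg := fun x => (hCg' x).trans (le_max_left _ _)
  have hCg0 : (0:ℝ) ≤ Cg := le_max_right _ _
  have hgc : Continuous g := hgu.continuous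
  intro t
  show Tendsto _ atTop (𝓝 0)
  rw [NormedAddCommGroup.tendsto_nhds_zero]
  intro ε hε
  set δ : ℝ := ε / (4 * (Cf + 1)) with hδdef
  have hδ : 0 < δ := div_pos hε (by positivity)
  obtain ⟨h, hhCu, hb, H, hEb, hHs⟩ := happrox δ hδ
  obtain ⟨hhu, Ch', hCh'⟩ := hhCu
  set Ch : ℝ := max Ch' 0 with hChdef
  have hCh : ∀ x, ‖h x‖ ≤ Ch := fun x => (hCh' x).trans (le_max_left _ _)
  have hCh0 : (0:ℝ) ≤ Ch := le_max_right _ _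
  have hhc : Continuous h := hhu.continuous
  set u : G → ℂ := fun x => g x - h x with hu
  set M : ℝ := Cg + Ch with hMdef
  have hM : ∀ x, ‖u x‖ ≤ M := fun x => (norm_sub_le _ _).trans (add_le_add (hCg x) (hCh x))
  have hM0 : (0:ℝ) ≤ M := add_nonneg hCg0 hCh0
  have huc : Continuous u := hgc.sub hhc
  have htgc : Continuous (tilde g) := Complex.continuous_conj.comp (hgc.comp continuous_neg)
  have hthc : Continuous (tilde h) := Complex.continuous_conj.comp (hhc.comp continuous_neg)
  have htgb : ∀ x, ‖tilde g x‖ ≤ Cg := fun x => by simpa [tilde] using hCg (-x)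
  have hthb : ∀ x, ‖tilde h x‖ ≤ Ch := fun x => by simpa [tilde] using hCh (-x)
  -- Step 1 : `‖H t‖ < δ`, hence the `h`-averages are eventually `< δ`.
  have hHb : ∀ x, ‖H x‖ ≤ Cf * Ch := by
    intro x
    refine le_of_tendsto (hEb x).norm (Filter.Eventually.of_forall fun n => ?_)
    have hint : ‖∫ s in A n, f s * tilde h (x - s) ∂μ‖ ≤ (Cf * Ch) * (μ (A n)).toReal := by
      refine norm_setIntegral_le_of_norm_le_const (hmfin n).lt_top (fun s _ => ?_)
      · rw [norm_mul]
        exact mul_le_mul (hCf s) (hthb _) (norm_nonneg _) hCf0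
    calc ‖(μ (A n)).toReal⁻¹ • ∫ s in A n, f s * tilde h (x - s) ∂μ‖
        = (μ (A n)).toReal⁻¹ * ‖∫ s in A n, f s * tilde h (x - s) ∂μ‖ := by
          rw [norm_smul, Real.norm_eq_abs, abs_of_nonneg (ha0 n)]
      _ ≤ (μ (A n)).toReal⁻¹ * ((Cf * Ch) * (μ (A n)).toReal) :=
          mul_le_mul_of_nonneg_left hint (ha0 n)
      _ = (Cf * Ch) * ((μ (A n)).toReal⁻¹ * (μ (A n)).toReal) := by ring
      _ = Cf * Ch := by rw [hmn1 n, mul_one]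
  have hHt : ‖H t‖ < δ := by
    have hbdd : BddAbove (Set.range fun x => ‖H x‖) :=
      ⟨Cf * Ch, fun y hy => by obtain ⟨x, rfl⟩ := hy; exact hHb x⟩
    exact lt_of_le_of_lt (le_ciSup hbdd t) hHs
  have E1 : ∀ᶠ n in atTop,
      ‖(μ (A n)).toReal⁻¹ • ∫ s in A n, f s * tilde h (t - s) ∂μ‖ < δ :=
    (hEb t).norm.eventually_lt_const hHt
  -- Step 2 : from the Besicovitch norm bound.
  have h2pow : ∀ y : ℝ, y ^ (2:ℝ) = y ^ 2 := fun y => by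
    rw [← Real.rpow_natCast y 2]; norm_num
  have hIu2 : ∀ (s : Set G), μ s ≠ ⊤ → IntegrableOn (fun x => ‖u x‖^2) s μ := by
    intro s hs
    refine stmt13_intOn hs (huc.norm.pow 2) (C := M^2) (fun x => ?_)
    rw [Real.norm_eq_abs, abs_of_nonneg (sq_nonneg _)]
    exact pow_le_pow_left₀ (norm_nonneg _) (hM x) 2
  set X : ℕ → ℝ := fun n => (μ (A n)).toReal⁻¹ * ∫ x in A n, ‖u x‖^2 ∂μ with hXdef
  have hXnn : ∀ n, 0 ≤ X n :=
    fun n => mul_nonneg (ha0 n) (integral_nonneg fun x => sq_nonneg _)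
  have hXle : ∀ n, X n ≤ M^2 := by
    intro n
    have hile : ∫ x in A n, ‖u x‖^2 ∂μ ≤ ∫ _x in A n, M^2 ∂μ :=
      integral_mono (hIu2 (A n) (hmfin n)) (integrableOn_const (hmfin n))
        (fun x => pow_le_pow_left₀ (norm_nonneg _) (hM x) 2)
    calc X n ≤ (μ (A n)).toReal⁻¹ * ∫ _x in A n, M^2 ∂μ :=
          mul_le_mul_of_nonneg_left hile (ha0 n)
      _ = M^2 * ((μ (A n)).toReal⁻¹ * (μ (A n)).toReal) := by
          rw [setIntegral_const, smul_eq_mul, measureReal_def]; ring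
      _ = M^2 := by rw [hmn1 n, mul_one]
  have hb' : Filter.limsup (fun n => (X n) ^ ((1:ℝ)/2)) atTop < δ := by
    have hbu : bNorm μ A 2 u < δ := hb
    unfold bNorm at hbu
    simp only [h2pow] at hbu
    exact hbu
  have hbdd : IsBoundedUnder (· ≤ ·) atTop (fun n => (X n) ^ ((1:ℝ)/2)) :=
    isBoundedUnder_of ⟨(M^2) ^ ((1:ℝ)/2),
      fun n => Real.rpow_le_rpow (hXnn n) (hXle n) (by norm_num)⟩
  have E2 : ∀ᶠ n in atTop, X n < δ^2 := by
    refine (eventually_lt_of_limsup_lt hb' hbdd).mono fun n hn => ?_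
    have h1 : X n = (X n ^ ((1:ℝ)/2))^2 := by
      rw [← Real.rpow_natCast (X n ^ ((1:ℝ)/2)) 2, ← Real.rpow_mul (hXnn n)]; norm_num
    rw [h1]
    exact pow_lt_pow_left₀ hn (Real.rpow_nonneg (hXnn n) _) two_ne_zero
  -- Step 3 : the van Hove estimate for the translated sets.
  set B : ℕ → Set G := fun n => (fun s => s + -t) '' (A n) with hBdef
  set Δ : ℕ → Set G := fun n => B n \ A n with hΔdef
  have hBc : ∀ n, IsCompact (B n) := fun n => (hAc n).image (continuous_add_right (-t))
  have hΔfin : ∀ n, μ (Δ n) ≠ ⊤ := fun n =>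
    ((measure_mono ((Set.diff_subset).trans subset_closure)).trans_lt
      (hBc n).closure.measure_lt_top).ne
  have hΔsub : ∀ n, Δ n ⊆ vhBoundary {-t} (A n) := by
    intro n x hx
    left
    refine ⟨subset_closure ?_, hx.2⟩
    obtain ⟨a, ha, rfl⟩ := hx.1
    exact Set.add_mem_add ha rfl
  have hsq : Tendsto (fun n => μ (Δ n) / μ (A n)) atTop (𝓝 0) := by
    have hvh := hAvh {-t} isCompact_singleton
    rw [ENNReal.tendsto_nhds_zero] at hvh ⊢
    intro η hη
    exact (hvh η hη).mono fun n hn =>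
      le_trans (ENNReal.div_le_div_right (measure_mono (hΔsub n)) _) hn
  have E3t : Tendsto (fun n => (μ (A n)).toReal⁻¹ * (μ (Δ n)).toReal) atTop (𝓝 0) := by
    have hc := (ENNReal.tendsto_toReal (show (0:ENNReal) ≠ ⊤ by simp)).comp hsq
    simpa [Function.comp_def, ENNReal.toReal_div, div_eq_mul_inv, mul_comm] using hc
  have E3 : ∀ᶠ n in atTop, M^2 * ((μ (A n)).toReal⁻¹ * (μ (Δ n)).toReal) < δ^2 := by
    have : Tendsto (fun n => M^2 * ((μ (A n)).toReal⁻¹ * (μ (Δ n)).toReal)) atTop (𝓝 0) := by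
      simpa using E3t.const_mul (M^2)
    exact this.eventually_lt_const (by positivity)
  -- translation of the integral
  have htrans : ∀ n, ∫ s in A n, ‖u (s - t)‖^2 ∂μ = ∫ y in B n, ‖u y‖^2 ∂μ := by
    intro n
    have hmp : MeasurePreserving (fun s : G => s + -t) μ μ := measurePreserving_add_right μ (-t)
    have hme : MeasurableEmbedding (fun s : G => s + -t) :=
      (MeasurableEquiv.addRight (-t)).measurableEmbedding
    simp only [hBdef, sub_eq_add_neg]
    exact (hmp.setIntegral_image_emb hme (fun y => ‖u y‖^2) (A n)).symm
  have hVle : ∀ n, ∫ y in B n, ‖u y‖^2 ∂μ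
      ≤ (∫ y in A n, ‖u y‖^2 ∂μ) + M^2 * (μ (Δ n)).toReal := by
    intro n
    have hIA : Integrable (fun y => ‖u y‖^2) (μ.restrict (A n)) := hIu2 (A n) (hmfin n)
    have hIΔ : Integrable (fun y => ‖u y‖^2) (μ.restrict (Δ n)) := hIu2 (Δ n) (hΔfin n)
    have hle1 : μ.restrict (B n) ≤ μ.restrict (A n) + μ.restrict (Δ n) := by
      refine le_trans (Measure.restrict_mono (fun y hy => ?_) le_rfl)
        (Measure.restrict_union_le _ _)
      by_cases hyA : y ∈ A n
      · exact Or.inl hyA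
      · exact Or.inr ⟨hy, hyA⟩
    have h0 : (0 : G → ℝ) ≤ᵐ[μ.restrict (A n) + μ.restrict (Δ n)] fun y => ‖u y‖^2 :=
      Filter.Eventually.of_forall fun y => sq_nonneg (‖u y‖)
    have hadd : Integrable (fun y => ‖u y‖^2) (μ.restrict (A n) + μ.restrict (Δ n)) :=
      Integrable.add_measure hIA hIΔ
    calc ∫ y in B n, ‖u y‖^2 ∂μ
        ≤ ∫ y, ‖u y‖^2 ∂(μ.restrict (A n) + μ.restrict (Δ n)) :=
          integral_mono_measure hle1 h0 hadd
      _ = (∫ y in A n, ‖u y‖^2 ∂μ) + ∫ y in Δ n, ‖u y‖^2 ∂μ := integral_add_measure hIA hIΔ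
      _ ≤ (∫ y in A n, ‖u y‖^2 ∂μ) + M^2 * (μ (Δ n)).toReal := by
          have h1 : ∫ y in Δ n, ‖u y‖^2 ∂μ ≤ ∫ _y in Δ n, M^2 ∂μ :=
            integral_mono hIΔ (integrableOn_const (hΔfin n))
              (fun y => pow_le_pow_left₀ (norm_nonneg _) (hM y) 2)
          have h2 : ∫ _y in Δ n, (M^2 : ℝ) ∂μ = M^2 * (μ (Δ n)).toReal := by
            rw [setIntegral_const, smul_eq_mul, measureReal_def, mul_comm]
          linarith [h1, h2]
  -- Main combination.
  filter_upwards [E1, E2, E3] with n h1 h2 h3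
  have hut : Continuous (fun s : G => u (s - t)) := huc.comp (continuous_id.sub continuous_const)
  have hI1 : Integrable (fun s => f s * tilde g (t - s)) (μ.restrict (A n)) :=
    stmt13_intOn (hmfin n) (hfc.mul (htgc.comp (continuous_const.sub continuous_id)))
      (C := Cf * Cg) (fun x => by
        rw [norm_mul]; exact mul_le_mul (hCf x) (htgb _) (norm_nonneg _) hCf0)
  have hI2 : Integrable (fun s => f s * tilde h (t - s)) (μ.restrict (A n)) :=
    stmt13_intOn (hmfin n) (hfc.mul (hthc.comp (continuous_const.sub continuous_id)))
      (C := Cf * Ch) (fun x => by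
        rw [norm_mul]; exact mul_le_mul (hCf x) (hthb _) (norm_nonneg _) hCf0)
  have hconjeq : ∀ s : G, tilde g (t - s) - tilde h (t - s) = conj (u (s - t)) := by
    intro s
    simp only [tilde, hu, neg_sub, map_sub]
  have hI12 : Integrable (fun s => f s * conj (u (s - t))) (μ.restrict (A n)) :=
    stmt13_intOn (hmfin n)
      (hfc.mul (Complex.continuous_conj.comp hut)) (C := Cf * M) (fun x => by
        rw [norm_mul, RCLike.norm_conj]
        exact mul_le_mul (hCf x) (hM _) (norm_nonneg _) hCf0)
  have hIut2 : Integrable (fun s => ‖u (s - t)‖^2) (μ.restrict (A n)) := by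
    refine stmt13_intOn (hmfin n) (hut.norm.pow 2) (C := M^2) (fun x => ?_)
    rw [Real.norm_eq_abs, abs_of_nonneg (sq_nonneg _)]
    exact pow_le_pow_left₀ (norm_nonneg _) (hM _) 2
  have hIconst : Integrable (fun _ : G => Cf * (δ/2)) (μ.restrict (A n)) :=
    integrableOn_const (hmfin n)
  have hIut2c : Integrable (fun s => (Cf/(2*δ)) * ‖u (s - t)‖^2) (μ.restrict (A n)) :=
    Integrable.const_mul hIut2 _
  -- split the average
  have hsplit : (μ (A n)).toReal⁻¹ • ∫ s in A n, f s * tilde g (t - s) ∂μ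
      = ((μ (A n)).toReal⁻¹ • ∫ s in A n, f s * tilde h (t - s) ∂μ)
        + (μ (A n)).toReal⁻¹ • ∫ s in A n, f s * conj (u (s - t)) ∂μ := by
    rw [← smul_add, ← integral_add hI2 hI12]
    congr 1
    refine integral_congr_ae (Filter.Eventually.of_forall fun s => ?_)
    show f s * tilde g (t - s) = f s * tilde h (t - s) + f s * conj (u (s - t))
    rw [← hconjeq s]
    ring
  -- bound the quadratic average
  have hVbound : (μ (A n)).toReal⁻¹ * ∫ s in A n, ‖u (s - t)‖^2 ∂μ < 2 * δ^2 := by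
    have step : (μ (A n)).toReal⁻¹ * ∫ s in A n, ‖u (s - t)‖^2 ∂μ
        ≤ X n + M^2 * ((μ (A n)).toReal⁻¹ * (μ (Δ n)).toReal) := by
      rw [htrans n]
      calc (μ (A n)).toReal⁻¹ * ∫ y in B n, ‖u y‖^2 ∂μ
          ≤ (μ (A n)).toReal⁻¹ * ((∫ y in A n, ‖u y‖^2 ∂μ) + M^2 * (μ (Δ n)).toReal) :=
            mul_le_mul_of_nonneg_left (hVle n) (ha0 n)
        _ = X n + M^2 * ((μ (A n)).toReal⁻¹ * (μ (Δ n)).toReal) := by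
            rw [hXdef]; ring
    linarith [step, h2, h3]
  -- bound the difference term
  have hDb : ‖(μ (A n)).toReal⁻¹ • ∫ s in A n, f s * conj (u (s - t)) ∂μ‖
      ≤ Cf * (δ/2) + (Cf/(2*δ)) * ((μ (A n)).toReal⁻¹ * ∫ s in A n, ‖u (s - t)‖^2 ∂μ) := by
    have hIrhs : Integrable (fun s => Cf * (δ/2) + (Cf/(2*δ)) * ‖u (s - t)‖^2)
        (μ.restrict (A n)) := Integrable.add hIconst hIut2c
    have hptw : ∀ s, ‖f s * conj (u (s - t))‖
        ≤ Cf * (δ/2) + (Cf/(2*δ)) * ‖u (s - t)‖^2 := by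
      intro s
      rw [norm_mul, RCLike.norm_conj]
      have h0 : (0:ℝ) ≤ ‖u (s - t)‖ := norm_nonneg _
      have hkey : δ * 2 * ‖u (s - t)‖ ≤ δ^2 + ‖u (s - t)‖^2 := by
        nlinarith [sq_nonneg (‖u (s - t)‖ - δ)]
      have hc0 : (0:ℝ) ≤ Cf / (2*δ) := by positivity
      have h3' := mul_le_mul_of_nonneg_left hkey hc0
      have e1 : Cf/(2*δ) * (δ*2*‖u (s - t)‖) = Cf * ‖u (s - t)‖ := by
        field_simp
      have e2 : Cf/(2*δ) * (δ^2 + ‖u (s - t)‖^2)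
          = Cf*(δ/2) + Cf/(2*δ)*‖u (s - t)‖^2 := by
        field_simp
      have hstep : Cf * ‖u (s - t)‖ ≤ Cf*(δ/2) + Cf/(2*δ)*‖u (s - t)‖^2 := by
        linarith [h3', e1, e2]
      exact le_trans (mul_le_mul_of_nonneg_right (hCf s) h0) hstep
    have hIn : Integrable (fun s => ‖f s * conj (u (s - t))‖) (μ.restrict (A n)) :=
      Integrable.norm hI12
    calc ‖(μ (A n)).toReal⁻¹ • ∫ s in A n, f s * conj (u (s - t)) ∂μ‖
        = (μ (A n)).toReal⁻¹ * ‖∫ s in A n, f s * conj (u (s - t)) ∂μ‖ := by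
          rw [norm_smul, Real.norm_eq_abs, abs_of_nonneg (ha0 n)]
      _ ≤ (μ (A n)).toReal⁻¹ * ∫ s in A n, ‖f s * conj (u (s - t))‖ ∂μ :=
          mul_le_mul_of_nonneg_left (norm_integral_le_integral_norm _) (ha0 n)
      _ ≤ (μ (A n)).toReal⁻¹ * ∫ s in A n, (Cf * (δ/2) + (Cf/(2*δ)) * ‖u (s - t)‖^2) ∂μ :=
          mul_le_mul_of_nonneg_left
            (integral_mono hIn hIrhs (fun s => hptw s)) (ha0 n)
      _ = (μ (A n)).toReal⁻¹ * ((Cf * (δ/2)) * (μ (A n)).toReal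
            + (Cf/(2*δ)) * ∫ s in A n, ‖u (s - t)‖^2 ∂μ) := by
          have hint : ∫ s in A n, (Cf * (δ/2) + (Cf/(2*δ)) * ‖u (s - t)‖^2) ∂μ
              = (Cf * (δ/2)) * (μ (A n)).toReal
                + (Cf/(2*δ)) * ∫ s in A n, ‖u (s - t)‖^2 ∂μ := by
            rw [integral_add hIconst hIut2c, setIntegral_const, smul_eq_mul, measureReal_def,
              mul_comm ((μ (A n)).toReal)]
            congr 1
            simpa [smul_eq_mul] using integral_smul (Cf/(2*δ)) (fun s => ‖u (s - t)‖^2)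
          rw [hint]
      _ = Cf * (δ/2) * ((μ (A n)).toReal⁻¹ * (μ (A n)).toReal)
            + (Cf/(2*δ)) * ((μ (A n)).toReal⁻¹ * ∫ s in A n, ‖u (s - t)‖^2 ∂μ) := by ring
      _ = Cf * (δ/2) + (Cf/(2*δ)) * ((μ (A n)).toReal⁻¹ * ∫ s in A n, ‖u (s - t)‖^2 ∂μ) := by
          rw [hmn1 n, mul_one]
  -- finish
  have hc0 : (0:ℝ) ≤ Cf / (2*δ) := by positivity
  have hD2 : ‖(μ (A n)).toReal⁻¹ • ∫ s in A n, f s * conj (u (s - t)) ∂μ‖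
      ≤ Cf * (δ/2) + Cf * δ := by
    have hmul := mul_le_mul_of_nonneg_left hVbound.le hc0
    have e3 : Cf/(2*δ) * (2*δ^2) = Cf * δ := by
      field_simp
    linarith [hDb, hmul, e3]
  have hfinal : ‖(μ (A n)).toReal⁻¹ • ∫ s in A n, f s * tilde g (t - s) ∂μ‖
      < δ + (Cf * (δ/2) + Cf * δ) := by
    rw [hsplit]
    calc ‖_ + _‖ ≤ ‖(μ (A n)).toReal⁻¹ • ∫ s in A n, f s * tilde h (t - s) ∂μ‖
          + ‖(μ (A n)).toReal⁻¹ • ∫ s in A n, f s * conj (u (s - t)) ∂μ‖ := norm_add_le _ _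
      _ < δ + (Cf * (δ/2) + Cf * δ) := add_lt_add_of_lt_of_le h1 hD2
  refine hfinal.trans_le ?_
  have hδε : δ * (4 * (Cf + 1)) = ε := by
    rw [hδdef]
    field_simp
  nlinarith [mul_nonneg hCf0 hδ.le, hδ]
end
end
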